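/- arXiv:0704.0614 — 5 statements merged into one kernel-verified Lean document; each statement's English description precedes it below -/
import Mathlib

section
/- If Φ : M_n(ℂ) → M_n(ℂ) is a linear map such that Φ maps the set of nilpotent matrices into itself and, more generally, Φ(A) has the same characteristic polynomial as A for every A in each fiber (i.e., σ(Φ(A)) = σ(A) whenever this makes sense), and if Φ preserves each fiber T_z = {A : characteristic polynomial coefficients equal z}, then Φ is injective. Formally: if Φ is linear, n ≥ 2, and Φ(T_z) ⊆ T_z for every z ∈ ℂ^n (where T_z is the set of matrices with prescribed characteristic polynomial coefficients z), then ker Φ = 0. -/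
open Matrix Polynomial

private lemma eq_zero_of_trace_mul_eq_zero {n : ℕ} {A : Matrix (Fin n) (Fin n) ℂ}
    (h : ∀ B : Matrix (Fin n) (Fin n) ℂ, trace (B * A) = 0) : A = 0 := by
  ext i j
  have := h (Matrix.single j i 1)
  simpa [Matrix.trace, Matrix.diag, Matrix.mul_apply, Matrix.single, ite_and,
    Finset.sum_ite_eq] using this

private lemma trace_eq_zero_of_det_invariant {n : ℕ} {A N : Matrix (Fin n) (Fin n) ℂ}
    (hN : IsUnit N.det)
    (h : ∀ s : ℂ, (N⁻¹ + s • A).det = N⁻¹.det) : trace (N * A) = 0 := by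
  have hdinv : N⁻¹.det ≠ 0 := by
    have := N.isUnit_nonsing_inv_det hN
    exact this.ne_zero
  have key : ∀ s : ℂ, (1 + s • (N * A)).det = 1 := by
    intro s
    have e : N⁻¹ * (1 + s • (N * A)) = N⁻¹ + s • A := by
      rw [mul_add, mul_one, mul_smul_comm, ← mul_assoc, nonsing_inv_mul _ hN, one_mul]
    have h2 := h s
    rw [← e, det_mul] at h2
    exact mul_left_cancel₀ hdinv (h2.trans (mul_one _).symm)
  set Q := (det (1 + (X : ℂ[X]) • (N * A).map C)).divX.divX with hQdef
  have hs : ∀ s : ℂ, s ≠ 0 → (Polynomial.C (trace (N * A)) + Q * X).eval s = 0 := by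
    intro s hs0
    have hexp := Matrix.det_one_add_smul s (N * A)
    rw [key s] at hexp
    have h2 : (trace (N * A) + Q.eval s * s) * s = 0 := by
      have : trace (N * A) * s + Q.eval s * s ^ 2 = 0 := by linear_combination -hexp
      linear_combination this
    rcases mul_eq_zero.mp h2 with h3 | h3
    · simp [h3]
    · exact absurd h3 hs0
  have hQ0 : Polynomial.C (trace (N * A)) + Q * X = 0 := by
    apply Polynomial.eq_zero_of_infinite_isRoot
    apply Set.Infinite.mono (s := ({(0 : ℂ)}ᶜ : Set ℂ))
    · intro s hsmem
      exact hs s hsmem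
    · exact (Set.finite_singleton (0 : ℂ)).infinite_compl
  have := congrArg (Polynomial.eval 0) hQ0
  simpa using this

/-- a linear map `Φ : M_n(ℂ) → M_n(ℂ)` (with `n ≥ 2`) preserving every
fiber of the characteristic-polynomial map (i.e. `Φ(A)` always has the same
characteristic polynomial as `A`) is injective: `ker Φ = 0`. -/
theorem linear_fiber_preserving_injective (n : ℕ) (hn : 2 ≤ n)
    (Φ : Matrix (Fin n) (Fin n) ℂ →ₗ[ℂ] Matrix (Fin n) (Fin n) ℂ)
    (hΦ : ∀ A : Matrix (Fin n) (Fin n) ℂ, (Φ A).charpoly = A.charpoly) :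
    LinearMap.ker Φ = ⊥ := by
  rw [LinearMap.ker_eq_bot']
  intro A hA
  have hchar : ∀ (s : ℂ) (B : Matrix (Fin n) (Fin n) ℂ),
      (B + s • A).charpoly = B.charpoly := by
    intro s B
    have h1 := hΦ (B + s • A)
    have h2 := hΦ B
    rw [map_add, LinearMap.map_smul, hA, smul_zero, add_zero] at h1
    rw [← h1, h2]
  have hdet : ∀ (s : ℂ) (B : Matrix (Fin n) (Fin n) ℂ), (B + s • A).det = B.det := by
    intro s B
    rw [det_eq_sign_charpoly_coeff, det_eq_sign_charpoly_coeff, hchar]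
  have htr : ∀ N : Matrix (Fin n) (Fin n) ℂ, IsUnit N.det → trace (N * A) = 0 := by
    intro N hN
    exact trace_eq_zero_of_det_invariant hN (fun s => hdet s _)
  have htrA : trace A = 0 := by simpa using htr 1 (by simp)
  have hall : ∀ B : Matrix (Fin n) (Fin n) ℂ, trace (B * A) = 0 := by
    intro B
    obtain ⟨c, hc0, hcdet⟩ : ∃ c : ℂ, c ≠ 0 ∧ (B - c • 1).det ≠ 0 := by
      set p : ℂ[X] := (B.map Polynomial.C - (X : ℂ[X]) • 1).det with hp
      have hpev : ∀ c : ℂ, p.eval c = (B - c • 1).det := by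
        intro c
        have := RingHom.map_det (Polynomial.evalRingHom c) (B.map Polynomial.C - (X : ℂ[X]) • 1)
        rw [hp]
        rw [show (Polynomial.evalRingHom c) (B.map Polynomial.C - (X : ℂ[X]) • 1).det
            = p.eval c from rfl] at this
        rw [this]
        congr 1
        ext i j
        by_cases hij : i = j <;>
          simp [Matrix.sub_apply, Matrix.smul_apply, Matrix.one_apply, hij]
      have hpne : p ≠ 0 := by
        have hneg : B.map Polynomial.C - (X : ℂ[X]) • 1 = -(charmatrix B) := by
          ext i j
          by_cases hij : i = j
          · subst hij; simp [charmatrix_apply_eq, Matrix.sub_apply, Matrix.smul_apply,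
              Matrix.one_apply]
          · simp [charmatrix_apply_ne _ _ _ hij, Matrix.sub_apply, Matrix.smul_apply,
              Matrix.one_apply, hij]
        rw [hp, hneg, Matrix.det_neg, Fintype.card_fin,
          show det (charmatrix B) = B.charpoly from rfl]
        exact mul_ne_zero (pow_ne_zero _ (by norm_num)) B.charpoly_monic.ne_zero
      have hfin : ({c : ℂ | p.IsRoot c} ∪ {0}).Finite :=
        (Polynomial.finite_setOf_isRoot hpne).union (Set.finite_singleton 0)
      obtain ⟨c, hc⟩ := hfin.infinite_compl.nonempty
      rw [Set.mem_compl_iff, Set.mem_union] at hc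
      push_neg at hc
      refine ⟨c, hc.2, ?_⟩
      rw [← hpev]
      exact hc.1
    have h1 := htr (B - c • 1) (isUnit_iff_ne_zero.mpr hcdet)
    rw [sub_mul, smul_mul_assoc, one_mul, trace_sub, trace_smul, htrA, smul_zero,
      sub_zero] at h1
    exact h1
  exact eq_zero_of_trace_mul_eq_zero hall
end

section
/- Let n ≥ 2, let A ∈ M_n(ℂ) be a nonzero nilpotent matrix, and choose linearly independent v₁, v₂ with A v₂ = v₁, A v₁ = 0. Extend to a basis (v₁,…,v_n) and define V ∈ M_n(ℂ) by V v₂ = v₁, V v₁ = v₂, V v_j = 0 for j ≥ 3. Then for every ζ ∈ ℂ, (A + ζV)² v_j = ζ(1 + ζ) v_j for j = 1, 2; consequently |ζ||1 + ζ| ≤ ρ(A + ζV)², where ρ is the spectral radius. -/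
open Matrix

/-- Spectral radius of a complex matrix. -/
noncomputable def rho {n : ℕ} (A : Matrix (Fin n) (Fin n) ℂ) : ℝ :=
  sSup ((fun z : ℂ => ‖z‖) '' spectrum ℂ A)

lemma abs_le_rho {n : ℕ} {B : Matrix (Fin n) (Fin n) ℂ} {lam : ℂ}
    (h : lam ∈ spectrum ℂ B) : ‖lam‖ ≤ rho B :=
  le_csSup ((B.finite_spectrum.image _).bddAbove) ⟨lam, h, rfl⟩

lemma mem_spectrum_of_det {n : ℕ} {B : Matrix (Fin n) (Fin n) ℂ} {lam : ℂ}
    (h : (B - lam • (1 : Matrix (Fin n) (Fin n) ℂ)).det = 0) : lam ∈ spectrum ℂ B := by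
  rw [spectrum.mem_iff]
  intro hu
  rw [Matrix.isUnit_iff_isUnit_det] at hu
  have : (algebraMap ℂ (Matrix (Fin n) (Fin n) ℂ) lam - B) = -(B - lam • 1) := by
    simp [Algebra.algebraMap_eq_smul_one]
  rw [this, Matrix.det_neg, h] at hu
  simp at hu

/-- with `A` nonzero nilpotent, `A v₂ = v₁`, `A v₁ = 0` for the first two
vectors of a basis `(v₁,…,v_n)`, and `V` defined by `V v₂ = v₁`, `V v₁ = v₂`,
`V v_j = 0` for `j ≥ 3`, one has `(A + ζV)² v_j = ζ(1+ζ) v_j` for `j = 1,2`, and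
consequently `|ζ||1+ζ| ≤ ρ(A + ζV)²`. -/
theorem perturbation_eigen (n : ℕ) (hn : 2 ≤ n)
    (A V : Matrix (Fin n) (Fin n) ℂ) (hnil : IsNilpotent A) (hA : A ≠ 0)
    (b : Module.Basis (Fin n) ℂ (Fin n → ℂ))
    (hA1 : A.mulVec (b ⟨1, by omega⟩) = b ⟨0, by omega⟩)
    (hA0 : A.mulVec (b ⟨0, by omega⟩) = 0)
    (hV1 : V.mulVec (b ⟨1, by omega⟩) = b ⟨0, by omega⟩)
    (hV0 : V.mulVec (b ⟨0, by omega⟩) = b ⟨1, by omega⟩)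
    (hVj : ∀ j : Fin n, j ≠ ⟨0, by omega⟩ → j ≠ ⟨1, by omega⟩ → V.mulVec (b j) = 0) :
    ∀ ζ : ℂ,
      ((A + ζ • V) * (A + ζ • V)).mulVec (b ⟨0, by omega⟩)
        = (ζ * (1 + ζ)) • b ⟨0, by omega⟩ ∧
      ((A + ζ • V) * (A + ζ • V)).mulVec (b ⟨1, by omega⟩)
        = (ζ * (1 + ζ)) • b ⟨1, by omega⟩ ∧
      ‖ζ‖ * ‖1 + ζ‖ ≤ (rho (A + ζ • V)) ^ 2 := by
  intro ζ
  set B := A + ζ • V with hB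
  have hB0 : B.mulVec (b ⟨0, by omega⟩) = ζ • b ⟨1, by omega⟩ := by
    rw [hB, Matrix.add_mulVec, hA0, Matrix.smul_mulVec, hV0, zero_add]
  have hB1 : B.mulVec (b ⟨1, by omega⟩) = (1 + ζ) • b ⟨0, by omega⟩ := by
    rw [hB, Matrix.add_mulVec, hA1, Matrix.smul_mulVec, hV1, add_smul, one_smul]
  have hsq0 : (B * B).mulVec (b ⟨0, by omega⟩) = (ζ * (1 + ζ)) • b ⟨0, by omega⟩ := by
    rw [← Matrix.mulVec_mulVec, hB0, Matrix.mulVec_smul, hB1, smul_smul]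
  have hsq1 : (B * B).mulVec (b ⟨1, by omega⟩) = (ζ * (1 + ζ)) • b ⟨1, by omega⟩ := by
    rw [← Matrix.mulVec_mulVec, hB1, Matrix.mulVec_smul, hB0, smul_smul, mul_comm]
  refine ⟨hsq0, hsq1, ?_⟩
  set μ := ζ * (1 + ζ) with hμ
  have habs : ‖ζ‖ * ‖1 + ζ‖ = ‖μ‖ := (norm_mul _ _).symm
  rw [habs]
  rcases eq_or_ne μ 0 with h0 | h0
  · rw [h0]; simpa using sq_nonneg (rho B)
  · obtain ⟨lam, hlam⟩ := IsAlgClosed.exists_pow_nat_eq (k := ℂ) μ two_pos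
    -- det (B*B - μ • 1) = 0
    have hdet : (B * B - μ • (1 : Matrix (Fin n) (Fin n) ℂ)).det = 0 := by
      rw [← Matrix.exists_mulVec_eq_zero_iff]
      refine ⟨b ⟨0, by omega⟩, b.ne_zero _, ?_⟩
      rw [Matrix.sub_mulVec, hsq0, Matrix.smul_mulVec, Matrix.one_mulVec, sub_self]
    have hfac : (B * B - μ • (1 : Matrix (Fin n) (Fin n) ℂ))
        = (B - lam • 1) * (B - (-lam) • 1) := by
      have : (lam : ℂ) ^ 2 = μ := hlam
      rw [← this]
      simp only [sub_mul, mul_sub, Matrix.mul_add, Matrix.add_mul, Matrix.smul_mul, Matrix.mul_smul, Matrix.one_mul,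
        Matrix.mul_one, smul_smul, neg_smul, neg_neg, sub_neg_eq_add, mul_neg, pow_two]
      abel
    have : (B - lam • 1).det = 0 ∨ (B - (-lam) • 1).det = 0 := by
      rw [hfac, Matrix.det_mul] at hdet
      exact mul_eq_zero.mp hdet
    have hlamne : lam ≠ 0 := by
      intro h; rw [h] at hlam; simp at hlam; exact h0 hlam.symm
    have key : ∃ l : ℂ, ‖l‖ = ‖lam‖ ∧ l ∈ spectrum ℂ B := by
      rcases this with h | h
      · exact ⟨lam, rfl, mem_spectrum_of_det h⟩
      · exact ⟨-lam, by simp, mem_spectrum_of_det h⟩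
    obtain ⟨l, hl, hls⟩ := key
    calc ‖μ‖ = ‖lam‖ ^ 2 := by rw [← hlam, norm_pow]
      _ = ‖l‖ ^ 2 := by rw [hl]
      _ ≤ rho B ^ 2 := by
          have := abs_le_rho hls
          have h0' : (0:ℝ) ≤ ‖l‖ := norm_nonneg _
          nlinarith
end

section
/- If A ∈ M_n(ℂ) is non-derogatory, then the differential of the map σ : M_n(ℂ) → ℂ^n (sending a matrix to the vector of coefficients of its characteristic polynomial) has rank n at A; in particular the fiber {B : σ(B) = σ(A)} is a smooth (complex) submanifold of dimension n² − n near A. -/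
open Matrix

attribute [local instance] Matrix.normedAddCommGroup Matrix.normedSpace

/-- A matrix is non-derogatory if its minimal polynomial equals its characteristic
polynomial. -/
def IsNonDerogatory {n : ℕ} (A : Matrix (Fin n) (Fin n) ℂ) : Prop :=
  A.charpoly = minpoly ℂ A

/-- The characteristic-coefficient map `σ : M_n(ℂ) → ℂⁿ`,
`σ_j(A) = (−1)^j ·` (coefficient of `λ^{n−j}` in `det(λI − A)`), `j = 1,…,n`. -/
noncomputable def sigmaMap (n : ℕ) (A : Matrix (Fin n) (Fin n) ℂ) : Fin n → ℂ :=
  fun j => (-1 : ℂ) ^ (j.val + 1) * A.charpoly.coeff (n - (j.val + 1))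

section Auxiliary

open Polynomial

variable {n : ℕ}

/-- entries as a continuous linear map -/
noncomputable def entriesCLM (n : ℕ) : Matrix (Fin n) (Fin n) ℂ →L[ℂ] (Fin n × Fin n → ℂ) :=
  LinearMap.toContinuousLinearMap
    { toFun := fun A p => A p.1 p.2
      map_add' := fun _ _ => rfl
      map_smul' := fun _ _ => rfl }

lemma charpoly_coeff_eq_eval (k : ℕ) (A : Matrix (Fin n) (Fin n) ℂ) :
    A.charpoly.coeff k = MvPolynomial.eval (entriesCLM n A)
      ((Matrix.charpoly.univ ℂ (Fin n)).coeff k) := by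
  have h := Matrix.charpoly.univ_map_eval₂Hom (Fin n) (RingHom.id ℂ)
    (fun p : Fin n × Fin n => A p.1 p.2)
  have hA : (Matrix.of (Function.curry fun p : Fin n × Fin n => A p.1 p.2)) = A := by
    ext i j; rfl
  rw [hA] at h
  rw [← h, Polynomial.coeff_map]
  rfl

lemma differentiable_sigmaMap (n : ℕ) : Differentiable ℂ (sigmaMap n) := by
  intro A
  refine differentiableAt_pi.mpr ?_
  intro j
  have ha : AnalyticAt ℂ (fun B : Matrix (Fin n) (Fin n) ℂ =>
      MvPolynomial.eval (entriesCLM n B)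
        ((Matrix.charpoly.univ ℂ (Fin n)).coeff (n - (j.val + 1)))) A :=
    AnalyticOnNhd.eval_continuousLinearMap (entriesCLM n) _ A trivial
  have hd := (ha.differentiableAt).const_mul ((-1 : ℂ) ^ (j.val + 1))
  refine hd.congr_of_eventuallyEq ?_
  filter_upwards with B
  simp only [sigmaMap]
  rw [charpoly_coeff_eq_eval]

section Companion

open Polynomial

variable {n : ℕ}

/-- companion-type matrix with last column `a` -/
def compMat (n : ℕ) (a : Fin n → ℂ) : Matrix (Fin n) (Fin n) ℂ :=
  Matrix.of fun i j => if (j : ℕ) = n - 1 then a i else if (i : ℕ) = (j : ℕ) + 1 then 1 else 0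

/-- its characteristic polynomial -/
noncomputable def compPoly (n : ℕ) (a : Fin n → ℂ) : Polynomial ℂ :=
  X ^ n - ∑ i : Fin n, C (a i) * X ^ (i : ℕ)

lemma degree_sum_fin_lt (a : Fin n → ℂ) (hn : 0 < n) :
    (∑ i : Fin n, C (a i) * X ^ (i : ℕ)).degree < (n : WithBot ℕ) := by
  refine lt_of_le_of_lt (degree_sum_le _ _) ?_
  rw [Finset.sup_lt_iff (by exact_mod_cast WithBot.bot_lt_coe n)]
  intro i _
  exact lt_of_le_of_lt (degree_C_mul_X_pow_le _ _) (by exact_mod_cast i.isLt)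

lemma compPoly_monic (a : Fin n → ℂ) (hn : 0 < n) : (compPoly n a).Monic := by
  rw [compPoly, sub_eq_add_neg]
  refine (monic_X_pow n).add_of_left ?_
  rw [degree_neg, degree_X_pow]
  exact degree_sum_fin_lt a hn

lemma compPoly_natDegree (a : Fin n → ℂ) (hn : 0 < n) : (compPoly n a).natDegree = n := by
  have h : (compPoly n a).degree = (n : ℕ) := by
    rw [compPoly, sub_eq_add_neg, degree_add_eq_left_of_degree_lt, degree_X_pow]
    rw [degree_neg, degree_X_pow]
    exact degree_sum_fin_lt a hn
  exact natDegree_eq_of_degree_eq_some h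

lemma coeff_sum_fin (c : Fin n → ℂ) (k : Fin n) :
    (∑ i : Fin n, C (c i) * X ^ (i : ℕ)).coeff (k : ℕ) = c k := by
  rw [finset_sum_coeff]
  rw [Finset.sum_eq_single k]
  · simp
  · intro i _ hik
    rw [coeff_C_mul, coeff_X_pow, if_neg (fun h => hik (Fin.ext (by omega))), mul_zero]
  · simp

lemma compPoly_coeff (a : Fin n → ℂ) (k : Fin n) :
    (compPoly n a).coeff (k : ℕ) = -a k := by
  rw [compPoly, coeff_sub, coeff_X_pow, if_neg (by omega), coeff_sum_fin, zero_sub]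

lemma compMat_mulVec_single (a : Fin n → ℂ) (j k : Fin n) (hk : (k : ℕ) = (j : ℕ) + 1) :
    compMat n a *ᵥ Pi.single j 1 = Pi.single k 1 := by
  funext i
  rw [mulVec_single_one]
  have hj : (j : ℕ) ≠ n - 1 := by omega
  simp only [compMat, col_apply, transpose_apply, of_apply, if_neg hj, Pi.single_apply]
  by_cases h : i = k
  · subst h; rw [if_pos (by omega), if_pos rfl]
  · rw [if_neg (fun hh => h (Fin.ext (by omega))), if_neg h]

lemma compMat_pow_mulVec' (a : Fin n → ℂ) (hn : 0 < n) (m : ℕ) (hm : m < n) :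
    (compMat n a) ^ m *ᵥ Pi.single (⟨0, hn⟩ : Fin n) 1 = Pi.single (⟨m, hm⟩ : Fin n) 1 := by
  induction m with
  | zero => rw [pow_zero, one_mulVec]
  | succ m ih =>
      have hm' : m < n := by omega
      rw [pow_succ', ← mulVec_mulVec, ih hm']
      exact compMat_mulVec_single a ⟨m, hm'⟩ ⟨m + 1, hm⟩ rfl

lemma compMat_pow_mulVec (a : Fin n → ℂ) (hn : 0 < n) (k : Fin n) :
    (compMat n a) ^ (k : ℕ) *ᵥ Pi.single (⟨0, hn⟩ : Fin n) 1 = Pi.single k 1 :=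
  compMat_pow_mulVec' a hn k.val k.isLt

lemma compMat_mulVec_last (a : Fin n → ℂ) (hn : 0 < n) :
    compMat n a *ᵥ Pi.single (⟨n - 1, by omega⟩ : Fin n) 1 = a := by
  funext i
  rw [mulVec_single_one]
  simp [compMat]

lemma sum_mulVec {ι : Type*} (s : Finset ι) (M : ι → Matrix (Fin n) (Fin n) ℂ)
    (v : Fin n → ℂ) : (∑ i ∈ s, M i) *ᵥ v = ∑ i ∈ s, M i *ᵥ v := by
  classical
  induction s using Finset.induction_on with
  | empty => simp
  | insert _ _ h ih => rw [Finset.sum_insert h, Finset.sum_insert h, add_mulVec, ih]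

lemma aeval_sum_fin_mulVec (M : Matrix (Fin n) (Fin n) ℂ) (c : Fin n → ℂ) (v : Fin n → ℂ) :
    (aeval M (∑ i : Fin n, C (c i) * X ^ (i : ℕ))) *ᵥ v
      = ∑ i : Fin n, c i • (M ^ (i : ℕ) *ᵥ v) := by
  rw [map_sum, sum_mulVec]
  refine Finset.sum_congr rfl fun i _ => ?_
  rw [_root_.map_mul, aeval_C, map_pow, aeval_X, ← Algebra.smul_def, smul_mulVec]

lemma aeval_compPoly_self (a : Fin n → ℂ) (hn : 0 < n) :
    aeval (compMat n a) (compPoly n a) = 0 := by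
  set M := compMat n a with hM
  set e0 : Fin n → ℂ := Pi.single (⟨0, hn⟩ : Fin n) 1 with he0
  have key : (aeval M (compPoly n a)) *ᵥ e0 = 0 := by
    rw [compPoly, map_sub, sub_mulVec, aeval_sum_fin_mulVec, map_pow, aeval_X]
    have hpow : M * M ^ (n - 1) = M ^ n := by
      rw [← pow_succ', Nat.sub_add_cancel hn]
    have h1 : M ^ n *ᵥ e0 = a := by
      rw [← hpow, ← mulVec_mulVec, he0, compMat_pow_mulVec' a hn (n - 1) (by omega)]
      exact compMat_mulVec_last a hn
    have h2 : (∑ i : Fin n, a i • (M ^ (i : ℕ) *ᵥ e0)) = a := by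
      rw [show (∑ i : Fin n, a i • (M ^ (i : ℕ) *ᵥ e0)) = ∑ i : Fin n, Pi.single i (a i) by
        refine Finset.sum_congr rfl fun i _ => ?_
        rw [he0, hM, compMat_pow_mulVec a hn i, ← Pi.single_smul, smul_eq_mul, mul_one]]
      exact Finset.univ_sum_single a
    rw [h1, h2, sub_self]
  ext i j
  have hcol : (aeval M (compPoly n a)) *ᵥ Pi.single j 1 = 0 := by
    rw [← compMat_pow_mulVec a hn j, ← hM, mulVec_mulVec]
    have hMk : aeval M ((X : Polynomial ℂ) ^ (j : ℕ)) = M ^ (j : ℕ) := by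
      rw [map_pow, aeval_X]
    rw [← hMk, ← _root_.map_mul, mul_comm, _root_.map_mul, hMk, ← mulVec_mulVec, key,
      mulVec_zero]
  have h := congrFun hcol i
  rw [mulVec_single_one] at h
  simpa using h

lemma aeval_mulVec_e0 (a : Fin n → ℂ) (hn : 0 < n) (q : Polynomial ℂ)
    (hq : q.natDegree < n) :
    (aeval (compMat n a) q) *ᵥ Pi.single (⟨0, hn⟩ : Fin n) 1
      = fun i : Fin n => q.coeff (i : ℕ) := by
  rw [aeval_eq_sum_range' hq, sum_mulVec, Finset.sum_range
    (fun i => (q.coeff i • (compMat n a) ^ i) *ᵥ Pi.single (⟨0, hn⟩ : Fin n) 1)]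
  refine (Finset.sum_congr rfl fun i _ => ?_).trans
    (Finset.univ_sum_single fun i : Fin n => q.coeff (i : ℕ))
  rw [smul_mulVec, compMat_pow_mulVec a hn i, ← Pi.single_smul, smul_eq_mul, mul_one]

lemma minpoly_compMat (a : Fin n → ℂ) (hn : 0 < n) :
    minpoly ℂ (compMat n a) = compPoly n a := by
  have hdvd : minpoly ℂ (compMat n a) ∣ compPoly n a :=
    minpoly.dvd ℂ _ (aeval_compPoly_self a hn)
  have hmonic : (minpoly ℂ (compMat n a)).Monic := minpoly.monic (Matrix.isIntegral _)
  have hle : (minpoly ℂ (compMat n a)).natDegree ≤ n := by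
    have := Polynomial.natDegree_le_of_dvd hdvd (compPoly_monic a hn).ne_zero
    rwa [compPoly_natDegree a hn] at this
  have hge : n ≤ (minpoly ℂ (compMat n a)).natDegree := by
    by_contra hlt
    push_neg at hlt
    have h0 := aeval_mulVec_e0 a hn (minpoly ℂ (compMat n a)) hlt
    rw [minpoly.aeval, zero_mulVec] at h0
    have := congrFun h0.symm ⟨(minpoly ℂ (compMat n a)).natDegree, hlt⟩
    rw [Polynomial.coeff_natDegree, hmonic.leadingCoeff] at this
    simpa using this
  exact (Polynomial.eq_of_monic_of_dvd_of_natDegree_le hmonic (compPoly_monic a hn) hdvd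
    (by rw [compPoly_natDegree a hn]; omega)).symm

lemma charpoly_compMat (a : Fin n → ℂ) (hn : 0 < n) :
    (compMat n a).charpoly = compPoly n a := by
  have hdvd : minpoly ℂ (compMat n a) ∣ (compMat n a).charpoly :=
    Matrix.minpoly_dvd_charpoly _
  rw [minpoly_compMat a hn] at hdvd
  refine Polynomial.eq_of_monic_of_dvd_of_natDegree_le (compPoly_monic a hn)
    (Matrix.charpoly_monic _) hdvd ?_
  rw [Matrix.charpoly_natDegree_eq_dim, Fintype.card_fin, compPoly_natDegree a hn]

lemma matrix_ne_zero_exists_mulVec {M : Matrix (Fin n) (Fin n) ℂ} (hM : M ≠ 0) :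
    ∃ w, M *ᵥ w ≠ 0 := by
  by_contra h
  push_neg at h
  apply hM
  ext i j
  have h2 := congrFun (h (Pi.single j 1)) i
  rw [mulVec_single_one] at h2
  simpa using h2

lemma mulVec_sum {ι : Type*} (s : Finset ι) (M : Matrix (Fin n) (Fin n) ℂ)
    (v : ι → Fin n → ℂ) : M *ᵥ (∑ i ∈ s, v i) = ∑ i ∈ s, M *ᵥ v i := by
  simpa only [mulVecLin_apply] using map_sum M.mulVecLin v s

lemma exists_cyclic (A : Matrix (Fin n) (Fin n) ℂ) (hn : 0 < n)
    (hd : (minpoly ℂ A).natDegree = n) :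
    ∃ v : Fin n → ℂ, ∀ q : Polynomial ℂ, q ≠ 0 → (aeval A q) *ᵥ v = 0 → n ≤ q.natDegree := by
  classical
  set μ := minpoly ℂ A with hμ
  have hmonic : μ.Monic := minpoly.monic (Matrix.isIntegral A)
  have hne : μ ≠ 0 := hmonic.ne_zero
  have hNV : ∀ p : Polynomial ℂ, p ≠ 0 → p.natDegree < n → aeval A p ≠ 0 := by
    intro p h0 hdeg hz
    have h2 := Polynomial.natDegree_le_of_dvd (minpoly.dvd ℂ A hz) h0
    rw [← hμ] at h2
    omega
  set s := μ.roots.toFinset with hs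
  set m : ℂ → ℕ := fun l => μ.rootMultiplicity l with hm
  have hfac : ∀ l : ℂ, ∃ r, μ = (X - C l) ^ (m l) * r ∧ ¬ (X - C l) ∣ r :=
    fun l => μ.exists_eq_pow_rootMultiplicity_mul_and_not_dvd hne l
  choose r hr hrd using hfac
  have hrne : ∀ l, r l ≠ 0 := by
    intro l h0
    have h1 := hr l
    rw [h0, mul_zero] at h1
    exact hne h1
  have hrdeg : ∀ l, n = m l + (r l).natDegree := by
    intro l
    have := congrArg Polynomial.natDegree (hr l)
    rwa [hd, Polynomial.natDegree_mul (pow_ne_zero _ (Polynomial.X_sub_C_ne_zero l)) (hrne l),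
      Polynomial.natDegree_pow, Polynomial.natDegree_X_sub_C, mul_one] at this
  have hm1 : ∀ l ∈ s, 1 ≤ m l := by
    intro l hl
    rw [hs, Multiset.mem_toFinset, Polynomial.mem_roots'] at hl
    exact (Polynomial.rootMultiplicity_pos hl.1).mpr hl.2
  -- the test vectors
  have hgl : ∀ l ∈ s, aeval A ((X - C l) ^ (m l - 1) * r l) ≠ 0 := by
    intro l hl
    apply hNV
    · exact mul_ne_zero (pow_ne_zero _ (Polynomial.X_sub_C_ne_zero l)) (hrne l)
    · rw [Polynomial.natDegree_mul (pow_ne_zero _ (Polynomial.X_sub_C_ne_zero l)) (hrne l),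
        Polynomial.natDegree_pow, Polynomial.natDegree_X_sub_C, mul_one]
      have h1 := hrdeg l
      have h2 := hm1 l hl
      omega
  set w : ℂ → (Fin n → ℂ) := fun l =>
    if h : aeval A ((X - C l) ^ (m l - 1) * r l) ≠ 0 then
      Classical.choose (matrix_ne_zero_exists_mulVec h) else 0 with hwdef
  have hw : ∀ l ∈ s, (aeval A ((X - C l) ^ (m l - 1) * r l)) *ᵥ w l ≠ 0 := by
    intro l hl
    rw [hwdef]
    simp only [dif_pos (hgl l hl)]
    exact Classical.choose_spec (matrix_ne_zero_exists_mulVec (hgl l hl))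
  set vv : ℂ → (Fin n → ℂ) := fun l => (aeval A (r l)) *ᵥ w l with hvv
  have hv1 : ∀ l, (aeval A ((X - C l) ^ (m l))) *ᵥ vv l = 0 := by
    intro l
    rw [hvv, mulVec_mulVec, ← _root_.map_mul, ← hr l, hμ, minpoly.aeval, zero_mulVec]
  have hv2 : ∀ l ∈ s, (aeval A ((X - C l) ^ (m l - 1))) *ᵥ vv l ≠ 0 := by
    intro l hl
    rw [hvv, mulVec_mulVec, ← _root_.map_mul]
    exact hw l hl
  refine ⟨∑ l ∈ s, vv l, ?_⟩
  intro q hq0 hqv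
  have claim : ∀ l ∈ s, (X - C l) ^ (m l) ∣ q := by
    intro l hl
    set k := q.rootMultiplicity l with hk
    obtain ⟨u, hqu, hu⟩ := q.exists_eq_pow_rootMultiplicity_mul_and_not_dvd hq0 l
    by_cases hkm : m l ≤ k
    · rw [hqu]
      exact Dvd.dvd.mul_right (pow_dvd_pow _ hkm) u
    push_neg at hkm
    exfalso
    set P := ∏ t ∈ s.erase l, (X - C t) ^ (m t) with hP
    have stepA : (aeval A P) *ᵥ (∑ t ∈ s, vv t) = (aeval A P) *ᵥ vv l := by
      rw [mulVec_sum]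
      refine Finset.sum_eq_single_of_mem l hl ?_
      intro t ht htl
      have hdvdP : (X - C t) ^ (m t) ∣ P := Finset.dvd_prod_of_mem _ (Finset.mem_erase.mpr ⟨htl, ht⟩)
      obtain ⟨c, hc⟩ := hdvdP
      rw [hc, mul_comm ((X - C t) ^ (m t)) c, _root_.map_mul, ← mulVec_mulVec, hv1 t, mulVec_zero]
    set x := (aeval A ((X - C l) ^ k)) *ᵥ vv l with hx
    have stepB : (aeval A (u * P)) *ᵥ x = 0 := by
      rw [hx, mulVec_mulVec, ← _root_.map_mul]
      have hrg : u * P * (X - C l) ^ k = q * P := by rw [hqu]; ring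
      rw [hrg, _root_.map_mul, ← mulVec_mulVec, ← stepA, mulVec_mulVec, ← _root_.map_mul,
        mul_comm q P, _root_.map_mul, ← mulVec_mulVec, hqv, mulVec_zero]
    have stepC : IsCoprime ((X - C l) ^ (m l)) (u * P) := by
      refine IsCoprime.pow_left ?_
      rw [(Polynomial.irreducible_X_sub_C l).coprime_iff_not_dvd]
      intro hdvd
      rcases (Polynomial.prime_X_sub_C l).dvd_mul.mp hdvd with h | h
      · exact hu h
      · have hroot := Polynomial.dvd_iff_isRoot.mp h
        rw [hP] at hroot
        have : (∏ t ∈ s.erase l, (X - C t) ^ (m t)).eval l ≠ 0 := by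
          rw [Polynomial.eval_prod]
          refine Finset.prod_ne_zero_iff.mpr fun t ht => ?_
          rw [Polynomial.eval_pow, Polynomial.eval_sub, Polynomial.eval_X, Polynomial.eval_C]
          exact pow_ne_zero _ (sub_ne_zero.mpr (Finset.mem_erase.mp ht).1.symm)
        exact this hroot
    obtain ⟨α, β, hab⟩ := stepC
    have hx0 : x = 0 := by
      have h1 : (aeval A (α * (X - C l) ^ (m l) + β * (u * P))) *ᵥ x = x := by
        rw [hab, _root_.map_one, one_mulVec]
      rw [map_add, add_mulVec, _root_.map_mul, _root_.map_mul] at h1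
      have hA1 : (aeval A α * aeval A ((X - C l) ^ (m l))) *ᵥ x = 0 := by
        rw [← mulVec_mulVec]
        suffices h : aeval A ((X - C l) ^ (m l)) *ᵥ x = 0 by rw [h, mulVec_zero]
        rw [hx, mulVec_mulVec, ← _root_.map_mul, ← pow_add,
          show m l + k = k + m l from Nat.add_comm _ _, pow_add, _root_.map_mul,
          ← mulVec_mulVec, hv1 l, mulVec_zero]
      have hA2 : (aeval A β * aeval A (u * P)) *ᵥ x = 0 := by
        rw [← mulVec_mulVec, stepB, mulVec_zero]
      rw [hA1, hA2, add_zero] at h1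
      exact h1.symm
    apply hv2 l hl
    have hsplit : (m l - 1) = (m l - 1 - k) + k := by omega
    rw [hsplit, pow_add, _root_.map_mul, ← mulVec_mulVec, ← hx, hx0, mulVec_zero]
  have hprod : (∏ l ∈ s, (X - C l) ^ (m l)) ∣ q := by
    refine Finset.prod_dvd_of_coprime (fun a ha b hb hab => ?_) claim
    refine IsCoprime.pow ?_
    rw [(Polynomial.irreducible_X_sub_C a).coprime_iff_not_dvd]
    intro hdvd
    have := Polynomial.dvd_iff_isRoot.mp hdvd
    rw [Polynomial.IsRoot, Polynomial.eval_sub, Polynomial.eval_X, Polynomial.eval_C,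
      sub_eq_zero] at this
    exact hab this
  have hdeg : (∏ l ∈ s, (X - C l) ^ (m l)).natDegree = n := by
    rw [Polynomial.natDegree_prod _ _ (fun l _ => pow_ne_zero _ (Polynomial.X_sub_C_ne_zero l))]
    rw [Finset.sum_congr rfl (fun l _ => by
      rw [Polynomial.natDegree_pow, Polynomial.natDegree_X_sub_C, mul_one])]
    rw [Finset.sum_congr rfl (fun l (_ : l ∈ s) => (Polynomial.count_roots μ).symm),
      Multiset.toFinset_sum_count_eq,
      Polynomial.splits_iff_card_roots.mp (IsAlgClosed.splits μ), hd]
  calc n = (∏ l ∈ s, (X - C l) ^ (m l)).natDegree := hdeg.symm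
    _ ≤ q.natDegree := Polynomial.natDegree_le_of_dvd hprod hq0

lemma ext_mulVec_single {M N : Matrix (Fin n) (Fin n) ℂ}
    (h : ∀ j, M *ᵥ Pi.single j 1 = N *ᵥ Pi.single j 1) : M = N := by
  ext i j
  have h2 := congrFun (h j) i
  rwa [mulVec_single_one, mulVec_single_one] at h2

lemma exists_similar_compMat (A : Matrix (Fin n) (Fin n) ℂ) (hn : 0 < n)
    (hA : A.charpoly = minpoly ℂ A) :
    ∃ (a : Fin n → ℂ) (P : (Matrix (Fin n) (Fin n) ℂ)ˣ),
      A = (P : Matrix (Fin n) (Fin n) ℂ) * compMat n a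
        * ((P⁻¹ : (Matrix (Fin n) (Fin n) ℂ)ˣ) : Matrix (Fin n) (Fin n) ℂ) := by
  classical
  have hnd : A.charpoly.natDegree = n := by
    rw [Matrix.charpoly_natDegree_eq_dim, Fintype.card_fin]
  have hd : (minpoly ℂ A).natDegree = n := by rw [← hA, hnd]
  obtain ⟨v, hv⟩ := exists_cyclic A hn hd
  have hli : LinearIndependent ℂ (fun j : Fin n => (A ^ (j : ℕ)) *ᵥ v) := by
    rw [Fintype.linearIndependent_iff]
    intro c hc
    have hsum : (aeval A (∑ i : Fin n, C (c i) * X ^ (i : ℕ))) *ᵥ v = 0 := by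
      rw [aeval_sum_fin_mulVec]; exact hc
    by_cases hq : (∑ i : Fin n, C (c i) * X ^ (i : ℕ)) = 0
    · intro i
      have h2 : c i = ((0 : Polynomial ℂ)).coeff (i : ℕ) := by rw [← hq, coeff_sum_fin]
      simpa using h2
    · exfalso
      have h1 := hv _ hq hsum
      have h2 : (∑ i : Fin n, C (c i) * X ^ (i : ℕ)).natDegree < n :=
        (Polynomial.natDegree_lt_iff_degree_lt hq).mpr (degree_sum_fin_lt c hn)
      omega
  set P : Matrix (Fin n) (Fin n) ℂ := Matrix.of fun i j => ((A ^ (j : ℕ)) *ᵥ v) i with hPdef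
  have hPu : IsUnit P := by
    rw [← Matrix.linearIndependent_cols_iff_isUnit]
    exact hli
  obtain ⟨U, hU⟩ := hPu
  set a : Fin n → ℂ := fun i => -(A.charpoly.coeff (i : ℕ)) with ha
  -- columns of P
  have hPcol : ∀ j : Fin n, P *ᵥ Pi.single j 1 = (A ^ (j : ℕ)) *ᵥ v := by
    intro j
    funext i
    rw [mulVec_single_one]
    rfl
  have hPmul : ∀ c : Fin n → ℂ, P *ᵥ c = ∑ j : Fin n, c j • ((A ^ (j : ℕ)) *ᵥ v) := by
    intro c
    funext i
    simp only [mulVec, dotProduct, hPdef, Matrix.of_apply, Finset.sum_apply, Pi.smul_apply,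
      smul_eq_mul]
    exact Finset.sum_congr rfl fun j _ => mul_comm _ _
  -- Cayley-Hamilton
  have hCH : A ^ n *ᵥ v = ∑ j : Fin n, a j • ((A ^ (j : ℕ)) *ᵥ v) := by
    have h0 := Matrix.aeval_self_charpoly A
    rw [aeval_eq_sum_range, hnd, Finset.sum_range_succ] at h0
    have hco : A.charpoly.coeff n = 1 := by
      have := (Matrix.charpoly_monic A).coeff_natDegree
      rwa [hnd] at this
    rw [hco, one_smul] at h0
    have h1 : A ^ n = -∑ i ∈ Finset.range n, A.charpoly.coeff i • A ^ i := by
      rw [eq_neg_iff_add_eq_zero, add_comm]; exact h0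
    rw [h1, neg_mulVec, sum_mulVec,
      Finset.sum_range (fun i => (A.charpoly.coeff i • A ^ i) *ᵥ v),
      ← Finset.sum_neg_distrib]
    refine Finset.sum_congr rfl fun j _ => ?_
    simp only [smul_mulVec, ← neg_smul, ha]
  have hAP : A * P = P * compMat n a := by
    refine ext_mulVec_single fun j => ?_
    rw [← mulVec_mulVec, ← mulVec_mulVec, hPcol j, mulVec_mulVec, ← pow_succ']
    by_cases hj : (j : ℕ) < n - 1
    · rw [compMat_mulVec_single a j ⟨(j : ℕ) + 1, by omega⟩ rfl, hPcol]
    · have hj' : (j : ℕ) = n - 1 := by omega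
      have hj'' : j = (⟨n - 1, by omega⟩ : Fin n) := Fin.ext hj'
      rw [hj'', compMat_mulVec_last a hn, hPmul]
      rw [show (⟨n - 1, by omega⟩ : Fin n).val + 1 = n by omega]
      exact hCH
  refine ⟨a, U, ?_⟩
  have hAU : A * (U : Matrix (Fin n) (Fin n) ℂ)
      = (U : Matrix (Fin n) (Fin n) ℂ) * compMat n a := by rw [hU]; exact hAP
  calc A = A * (U : Matrix (Fin n) (Fin n) ℂ)
        * ((U⁻¹ : (Matrix (Fin n) (Fin n) ℂ)ˣ) : Matrix (Fin n) (Fin n) ℂ) := by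
        rw [mul_assoc, Units.mul_inv, mul_one]
    _ = _ := by rw [hAU]

/- charpoly conjugation invariance -/
lemma charpoly_units_conj (P : (Matrix (Fin n) (Fin n) ℂ)ˣ) (B : Matrix (Fin n) (Fin n) ℂ) :
    ((P : Matrix (Fin n) (Fin n) ℂ) * B
      * ((P⁻¹ : (Matrix (Fin n) (Fin n) ℂ)ˣ) : Matrix (Fin n) (Fin n) ℂ)).charpoly
      = B.charpoly := by
  set f := (Polynomial.C : ℂ →+* Polynomial ℂ).mapMatrix
    (m := Fin n) with hf
  have hf1 : f (P : Matrix (Fin n) (Fin n) ℂ)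
      * f ((P⁻¹ : (Matrix (Fin n) (Fin n) ℂ)ˣ) : Matrix (Fin n) (Fin n) ℂ) = 1 := by
    rw [← _root_.map_mul, Units.mul_inv, _root_.map_one]
  have key : charmatrix ((P : Matrix (Fin n) (Fin n) ℂ) * B
      * ((P⁻¹ : (Matrix (Fin n) (Fin n) ℂ)ˣ) : Matrix (Fin n) (Fin n) ℂ))
      = f (P : Matrix (Fin n) (Fin n) ℂ) * charmatrix B
        * f ((P⁻¹ : (Matrix (Fin n) (Fin n) ℂ)ˣ) : Matrix (Fin n) (Fin n) ℂ) := by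
    rw [charmatrix, charmatrix, _root_.map_mul, _root_.map_mul, mul_sub, sub_mul]
    congr 1
    have h2 : f (P : Matrix (Fin n) (Fin n) ℂ) * Matrix.scalar (Fin n) (X : Polynomial ℂ)
        * f ((P⁻¹ : (Matrix (Fin n) (Fin n) ℂ)ˣ) : Matrix (Fin n) (Fin n) ℂ)
        = Matrix.scalar (Fin n) (X : Polynomial ℂ) := by
      rw [← Matrix.scalar_commute (X : Polynomial ℂ) (fun r' => Commute.all _ _) _,
        mul_assoc, hf1, mul_one]
    exact h2.symm
  rw [Matrix.charpoly, Matrix.charpoly, key, det_mul, det_mul,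
    mul_comm (det (f (P : Matrix (Fin n) (Fin n) ℂ))) _, mul_assoc, ← det_mul, hf1, det_one,
    mul_one]

lemma sigmaMap_conj (P : (Matrix (Fin n) (Fin n) ℂ)ˣ) (B : Matrix (Fin n) (Fin n) ℂ) :
    sigmaMap n ((P : Matrix (Fin n) (Fin n) ℂ) * B
      * ((P⁻¹ : (Matrix (Fin n) (Fin n) ℂ)ˣ) : Matrix (Fin n) (Fin n) ℂ)) = sigmaMap n B := by
  funext j
  rw [sigmaMap, sigmaMap, charpoly_units_conj]

lemma sigma_compMat (hn : 0 < n) (b : Fin n → ℂ) :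
    sigmaMap n (compMat n b) = fun j => (-1 : ℂ) ^ (j.val) * b (Fin.rev j) := by
  funext j
  rw [sigmaMap, charpoly_compMat b hn]
  have h1 : n - (j.val + 1) = ((Fin.rev j : Fin n) : ℕ) := (Fin.val_rev j).symm
  rw [h1, compPoly_coeff b (Fin.rev j), pow_succ]
  ring

/-- the perturbation linear map -/
noncomputable def LcCLM (n : ℕ) : (Fin n → ℂ) →L[ℂ] Matrix (Fin n) (Fin n) ℂ :=
  LinearMap.toContinuousLinearMap
    { toFun := fun d => Matrix.of fun i j => if (j : ℕ) = n - 1 then d i else 0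
      map_add' := by
        intro d e; ext i j
        simp only [Matrix.of_apply, Matrix.add_apply, Pi.add_apply]
        split <;> simp
      map_smul' := by
        intro c d; ext i j
        simp only [Matrix.of_apply, Matrix.smul_apply, Pi.smul_apply, RingHom.id_apply,
          smul_eq_mul]
        split <;> simp }

/-- the signed reversal linear map -/
noncomputable def Erev (n : ℕ) : (Fin n → ℂ) →L[ℂ] (Fin n → ℂ) :=
  LinearMap.toContinuousLinearMap
    { toFun := fun b j => (-1 : ℂ) ^ (j.val) * b (Fin.rev j)
      map_add' := by intro b c; funext j; simp [mul_add]
      map_smul' := by intro a b; funext j; simp; ring }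

lemma hasFDerivAt_compMat (a : Fin n → ℂ) :
    HasFDerivAt (fun b : Fin n → ℂ => compMat n b) (LcCLM n) a := by
  have h : (fun b : Fin n → ℂ => compMat n b)
      = fun b => (compMat n a - LcCLM n a) + LcCLM n b := by
    funext b
    ext i j
    simp only [compMat, LcCLM, LinearMap.coe_toContinuousLinearMap', LinearMap.coe_mk,
      AddHom.coe_mk, Matrix.of_apply, Matrix.add_apply, Matrix.sub_apply]
    split <;> simp
  rw [h]
  exact (LcCLM n).hasFDerivAt.const_add _

lemma fderiv_surj_at_compMat (hn : 0 < n) (a : Fin n → ℂ) :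
    Function.Surjective (fderiv ℂ (sigmaMap n) (compMat n a)) := by
  have hfun : (fun b => sigmaMap n (compMat n b)) = ⇑(Erev n) := by
    funext b
    rw [sigma_compMat hn b]
    rfl
  have hσ : HasFDerivAt (sigmaMap n) (fderiv ℂ (sigmaMap n) (compMat n a)) (compMat n a) :=
    ((differentiable_sigmaMap n) (compMat n a)).hasFDerivAt
  have h1 : HasFDerivAt (fun b => sigmaMap n (compMat n b))
      ((fderiv ℂ (sigmaMap n) (compMat n a)).comp (LcCLM n)) a :=
    hσ.comp a (hasFDerivAt_compMat a)
  have h2 : HasFDerivAt (fun b => sigmaMap n (compMat n b)) (Erev n) a := by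
    rw [hfun]; exact (Erev n).hasFDerivAt
  have heq := h1.unique h2
  intro y
  refine ⟨LcCLM n (fun i => (-1 : ℂ) ^ ((Fin.rev i : Fin n) : ℕ) * y (Fin.rev i)), ?_⟩
  have hy := congrFun (congrArg (fun (T : (Fin n → ℂ) →L[ℂ] (Fin n → ℂ)) => T
    (fun i => (-1 : ℂ) ^ ((Fin.rev i : Fin n) : ℕ) * y (Fin.rev i))) heq)
  funext j
  have hj := hy j
  simp only [ContinuousLinearMap.coe_comp', Function.comp_apply] at hj
  rw [hj]
  show (-1 : ℂ) ^ (j.val) * ((-1 : ℂ) ^ ((Fin.rev (Fin.rev j) : Fin n) : ℕ)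
    * y (Fin.rev (Fin.rev j))) = y j
  rw [Fin.rev_rev, ← mul_assoc, ← pow_add]
  rw [Even.neg_one_pow ⟨j.val, rfl⟩, one_mul]

end Companion

/-- at a non-derogatory matrix `A`, the differential of `σ` has
rank `n`. -/
theorem sigma_rank_at_nonderogatory (n : ℕ) (A : Matrix (Fin n) (Fin n) ℂ)
    (hA : IsNonDerogatory A) :
    LinearMap.rank ((fderiv ℂ (sigmaMap n) A :
      Matrix (Fin n) (Fin n) ℂ →L[ℂ] (Fin n → ℂ)) :
      Matrix (Fin n) (Fin n) ℂ →ₗ[ℂ] (Fin n → ℂ)) = n := by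
  have hsurj : Function.Surjective (fderiv ℂ (sigmaMap n) A) := by
    rcases Nat.eq_zero_or_pos n with h0 | hn
    · subst h0
      intro y
      exact ⟨0, Subsingleton.elim _ _⟩
    · obtain ⟨a, P, hsim⟩ := exists_similar_compMat A hn hA
      set D := fderiv ℂ (sigmaMap n) A with hD
      set Tclm : Matrix (Fin n) (Fin n) ℂ →L[ℂ] Matrix (Fin n) (Fin n) ℂ :=
        LinearMap.toContinuousLinearMap
          { toFun := fun B => (P : Matrix (Fin n) (Fin n) ℂ) * B
              * ((P⁻¹ : (Matrix (Fin n) (Fin n) ℂ)ˣ) : Matrix (Fin n) (Fin n) ℂ)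
            map_add' := fun B B' => by rw [mul_add, add_mul]
            map_smul' := fun c B => by
              dsimp only [RingHom.id_apply]
              rw [mul_smul_comm, smul_mul_assoc] } with hT
      have hTf : HasFDerivAt (fun B : Matrix (Fin n) (Fin n) ℂ =>
          (P : Matrix (Fin n) (Fin n) ℂ) * B
            * ((P⁻¹ : (Matrix (Fin n) (Fin n) ℂ)ˣ) : Matrix (Fin n) (Fin n) ℂ))
          Tclm (compMat n a) := Tclm.hasFDerivAt
      have hσA : HasFDerivAt (sigmaMap n) D ((P : Matrix (Fin n) (Fin n) ℂ) * compMat n a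
          * ((P⁻¹ : (Matrix (Fin n) (Fin n) ℂ)ˣ) : Matrix (Fin n) (Fin n) ℂ)) := by
        rw [← hsim]
        exact ((differentiable_sigmaMap n) A).hasFDerivAt
      have h1 := hσA.comp (compMat n a) hTf
      have hfun : (sigmaMap n ∘ fun B : Matrix (Fin n) (Fin n) ℂ =>
          (P : Matrix (Fin n) (Fin n) ℂ) * B
            * ((P⁻¹ : (Matrix (Fin n) (Fin n) ℂ)ˣ) : Matrix (Fin n) (Fin n) ℂ))
          = sigmaMap n := funext fun B => sigmaMap_conj P B
      rw [hfun] at h1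
      have h2 : HasFDerivAt (sigmaMap n) (fderiv ℂ (sigmaMap n) (compMat n a))
          (compMat n a) := ((differentiable_sigmaMap n) (compMat n a)).hasFDerivAt
      have heq := h2.unique h1
      intro y
      obtain ⟨H, hH⟩ := fderiv_surj_at_compMat hn a y
      refine ⟨Tclm H, ?_⟩
      calc D (Tclm H) = (D.comp Tclm) H := rfl
        _ = fderiv ℂ (sigmaMap n) (compMat n a) H := by rw [heq]; rfl
        _ = y := hH
  have hr := rank_range_of_surjective
    ((fderiv ℂ (sigmaMap n) A : Matrix (Fin n) (Fin n) ℂ →L[ℂ] (Fin n → ℂ)) :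
      Matrix (Fin n) (Fin n) ℂ →ₗ[ℂ] (Fin n → ℂ)) hsurj
  rw [LinearMap.rank, hr, rank_fun', Fintype.card_fin]
end Auxiliary
end

section
/- If a holomorphic self-map F of the spectral unit ball Ω_n (n ≥ 2) satisfies σ(F(A)) = π_n(f(ζ_1),…,f(ζ_n)) whenever σ(A) = π_n(ζ_1,…,ζ_n), with f ∈ O(𝔻,𝔻), f(0)=0 and f'(0) ≠ 0, then the only nilpotent matrix mapped to 0 by F is 0: F⁻¹(0) ∩ T_0 ⊆ {0}. -/
open Matrix Polynomial Set

attribute [local instance] Matrix.normedAddCommGroup Matrix.normedSpace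

/-- The spectral unit ball `Ω_n`. -/
def specBall (n : ℕ) : Set (Matrix (Fin n) (Fin n) ℂ) := {A | rho A < 1}

lemma my_eval_charpoly {n : ℕ} (M : Matrix (Fin n) (Fin n) ℂ) (x : ℂ) :
    M.charpoly.eval x = (x • (1 : Matrix (Fin n) (Fin n) ℂ) - M).det := by
  rw [Matrix.charpoly, ← Polynomial.coe_evalRingHom, RingHom.map_det]
  congr 1
  ext i j
  by_cases h : i = j
  · subst h; simp [charmatrix_apply_eq, Matrix.one_apply]
  · simp [charmatrix_apply_ne _ _ _ h, Matrix.one_apply, h]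

lemma mem_specBall_of_root_bound {n : ℕ} (M : Matrix (Fin n) (Fin n) ℂ) (r : ℝ)
    (hr0 : 0 ≤ r) (hr : r < 1)
    (h : ∀ z : ℂ, M.charpoly.eval z = 0 → ‖z‖ ≤ r) : M ∈ specBall n := by
  have hb : ∀ y ∈ (fun z : ℂ => ‖z‖) '' spectrum ℂ M, y ≤ r := by
    rintro _ ⟨z, hz, rfl⟩
    refine h z ?_
    rw [my_eval_charpoly]
    by_contra hdet
    refine spectrum.mem_iff.mp hz ?_
    rw [Algebra.algebraMap_eq_smul_one]
    exact (Matrix.isUnit_iff_isUnit_det _).mpr (isUnit_iff_ne_zero.mpr hdet)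
  exact lt_of_le_of_lt (Real.sSup_le hb hr0) hr

lemma exists_mulVec_ne_zero {n : ℕ} {M : Matrix (Fin n) (Fin n) ℂ} (h : M ≠ 0) :
    ∃ x, M *ᵥ x ≠ 0 := by
  by_contra hc
  push_neg at hc
  refine h ?_
  ext i j
  have := congrFun (hc (Pi.single j 1)) i
  simpa [Matrix.mulVec_single] using this

lemma abs_trace_mul_le {n : ℕ} (N : Matrix (Fin n) (Fin n) ℂ) :
    ‖Matrix.trace (N * N)‖ ≤ (n : ℝ) ^ 2 * ‖N‖ ^ 2 := by
  have h1 : Matrix.trace (N * N) = ∑ i : Fin n, ∑ j : Fin n, N i j * N j i := by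
    simp [Matrix.trace, Matrix.diag, Matrix.mul_apply]
  rw [h1]
  calc ‖∑ i : Fin n, ∑ j : Fin n, N i j * N j i‖
      ≤ ∑ i : Fin n, ‖∑ j : Fin n, N i j * N j i‖ := norm_sum_le _ _
    _ ≤ ∑ i : Fin n, ∑ j : Fin n, ‖N i j * N j i‖ :=
        Finset.sum_le_sum fun i _ => norm_sum_le _ _
    _ ≤ ∑ _i : Fin n, ∑ _j : Fin n, ‖N‖ * ‖N‖ := by
        refine Finset.sum_le_sum fun i _ => Finset.sum_le_sum fun j _ => ?_
        rw [norm_mul]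
        exact mul_le_mul (Matrix.norm_entry_le_entrywise_sup_norm N)
          (Matrix.norm_entry_le_entrywise_sup_norm N) (norm_nonneg _) (norm_nonneg _)
    _ = (n : ℝ) ^ 2 * ‖N‖ ^ 2 := by
        simp [Finset.sum_const, Finset.card_univ]
        ring

lemma prod_two {n : ℕ} (hn : 2 ≤ n) (a b : ℂ) :
    (∏ i : Fin n, (X - C (if (i : ℕ) = 0 then a else if (i : ℕ) = 1 then b else 0))) =
      (X - C a) * (X - C b) * X ^ (n - 2) := by
  set i0 : Fin n := ⟨0, by omega⟩
  set i1 : Fin n := ⟨1, by omega⟩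
  have hne : i1 ≠ i0 := by simp [i0, i1, Fin.ext_iff]
  rw [← Finset.mul_prod_erase Finset.univ _ (Finset.mem_univ i0),
    ← Finset.mul_prod_erase _ _ (Finset.mem_erase.mpr ⟨hne, Finset.mem_univ i1⟩)]
  have h2 : ∏ i ∈ (Finset.univ.erase i0).erase i1,
      (X - C (if (i : ℕ) = 0 then a else if (i : ℕ) = 1 then b else 0)) = X ^ (n - 2) := by
    have hcongr : ∀ i ∈ (Finset.univ.erase i0).erase i1,
        (X - C (if (i : ℕ) = 0 then a else if (i : ℕ) = 1 then b else 0)) = (X : ℂ[X]) := by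
      intro i hi
      have hi1 : i ≠ i1 := (Finset.mem_erase.mp hi).1
      have hi0 : i ≠ i0 := (Finset.mem_erase.mp (Finset.mem_erase.mp hi).2).1
      have hv0 : (i : ℕ) ≠ 0 := fun hv => hi0 (Fin.ext hv)
      have hv1 : (i : ℕ) ≠ 1 := fun hv => hi1 (Fin.ext hv)
      simp [hv0, hv1]
    rw [Finset.prod_congr rfl hcongr, Finset.prod_const]
    congr 1
    rw [Finset.card_erase_of_mem (Finset.mem_erase.mpr ⟨hne, Finset.mem_univ i1⟩),
      Finset.card_erase_of_mem (Finset.mem_univ i0)]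
    simp only [Finset.card_univ, Fintype.card_fin]
    omega
  rw [h2]
  have hv0 : ((i0 : Fin n) : ℕ) = 0 := rfl
  have hv1 : ((i1 : Fin n) : ℕ) = 1 := rfl
  simp only [hv0, hv1, if_true, if_pos rfl]
  norm_num
  ring

lemma charpoly_perturb {n : ℕ} (hn : 2 ≤ n) (A : Matrix (Fin n) (Fin n) ℂ)
    (hcp : A.charpoly = X ^ n) (u φ : Fin n → ℂ)
    (hAAu : A *ᵥ (A *ᵥ u) = 0) (hφu : φ ⬝ᵥ u = 0) (hφAu : φ ⬝ᵥ (A *ᵥ u) = 1) (w : ℂ) :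
    (A + w • (replicateCol (Fin 1) u * replicateRow (Fin 1) φ)).charpoly = X ^ n - C w * X ^ (n - 2) := by
  apply Polynomial.eq_of_infinite_eval_eq
  refine Set.Infinite.mono ?_ ((Set.finite_singleton (0 : ℂ)).infinite_compl)
  intro x hx
  have hx0 : x ≠ 0 := hx
  set B := replicateCol (Fin 1) u * replicateRow (Fin 1) φ with hB
  set v2 : Fin n → ℂ := x⁻¹ • u + (x⁻¹ * x⁻¹) • (A *ᵥ u) with hv2
  have hstep1 : (x • (1 : Matrix (Fin n) (Fin n) ℂ) - A) *ᵥ v2 = u := by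
    rw [Matrix.sub_mulVec]
    rw [Matrix.smul_mulVec, Matrix.one_mulVec]
    rw [hv2]
    rw [Matrix.mulVec_add, Matrix.mulVec_smul, Matrix.mulVec_smul, hAAu, smul_zero, add_zero]
    rw [smul_add, smul_smul, smul_smul]
    rw [mul_inv_cancel₀ hx0]
    have : x * (x⁻¹ * x⁻¹) = x⁻¹ := by field_simp
    rw [this, one_smul]
    abel
  -- matrix times col
  have hmulcol : ∀ (M : Matrix (Fin n) (Fin n) ℂ) (y : Fin n → ℂ),
      M * (replicateCol (Fin 1) y * replicateRow (Fin 1) φ) = replicateCol (Fin 1) (M *ᵥ y) * replicateRow (Fin 1) φ := by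
    intro M y
    ext p q
    simp [Matrix.mul_apply, Matrix.mulVec, dotProduct, Finset.sum_mul, mul_assoc]
  have hfac : x • (1 : Matrix (Fin n) (Fin n) ℂ) - (A + w • B)
      = (x • 1 - A) * (1 + replicateCol (Fin 1) (-(w • v2)) * replicateRow (Fin 1) φ) := by
    rw [Matrix.mul_add, Matrix.mul_one, hmulcol]
    have h1 : (x • (1 : Matrix (Fin n) (Fin n) ℂ) - A) *ᵥ (-(w • v2)) = (-w) • u := by
      rw [show -(w • v2) = (-w) • v2 by rw [neg_smul], Matrix.mulVec_smul, hstep1]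
    rw [h1]
    have h2 : replicateCol (Fin 1) ((-w) • u) * replicateRow (Fin 1) φ = (-w) • B := by
      rw [hB, ← Matrix.smul_mul]
      congr 1
    rw [h2]
    module
  have heval : eval x ((A + w • B).charpoly) = eval x (X ^ n - C w * X ^ (n - 2)) := by
    rw [my_eval_charpoly, hfac, Matrix.det_mul]
    erw [Matrix.det_one_add_replicateCol_mul_replicateRow (ι := Fin 1)]
    have hd1 : (x • (1 : Matrix (Fin n) (Fin n) ℂ) - A).det = x ^ n := by
      rw [← my_eval_charpoly, hcp]
      simp
    have hd2 : φ ⬝ᵥ -(w • v2) = -(w * (x⁻¹ * x⁻¹)) := by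
      rw [dotProduct_neg, dotProduct_smul, hv2, dotProduct_add,
        dotProduct_smul, dotProduct_smul, hφu, hφAu]
      simp [smul_eq_mul]
    rw [hd1, hd2]
    have hxn : x ^ n = x ^ (n - 2) * x ^ 2 := by
      rw [← pow_add]
      congr 1
      omega
    simp only [eval_sub, eval_mul, eval_pow, eval_X, eval_C]
    rw [hxn]
    field_simp
    ring
  exact heval

lemma trace_sq {n : ℕ} (hn : 2 ≤ n) (M : Matrix (Fin n) (Fin n) ℂ) (a b : ℂ)
    (h : M.charpoly = (X - C a) * (X - C b) * X ^ (n - 2)) :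
    Matrix.trace (M * M) = a ^ 2 + b ^ 2 := by
  have hq : (M * M).charpoly = (X - C (a ^ 2)) * (X - C (b ^ 2)) * X ^ (n - 2) := by
    apply Polynomial.eq_of_infinite_eval_eq
    have hall : ∀ μ : ℂ, eval μ ((M * M).charpoly)
        = eval μ ((X - C (a ^ 2)) * (X - C (b ^ 2)) * X ^ (n - 2)) := by
      intro μ
      obtain ⟨x, hx⟩ := IsAlgClosed.exists_pow_nat_eq (k := ℂ) μ (n := 2) (by norm_num)
      have hfac : μ • (1 : Matrix (Fin n) (Fin n) ℂ) - M * M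
          = (x • 1 - M) * (x • 1 + M) := by
        rw [← hx]
        simp only [Matrix.sub_mul, Matrix.mul_add, Matrix.smul_mul, Matrix.mul_smul,
          Matrix.one_mul, Matrix.mul_one, smul_smul, ← pow_two]
        module
      have hneg : x • (1 : Matrix (Fin n) (Fin n) ℂ) + M = -((-x) • 1 - M) := by
        rw [neg_sub, neg_smul]
        abel
      rw [my_eval_charpoly, hfac, Matrix.det_mul, hneg, Matrix.det_neg,
        ← my_eval_charpoly, ← my_eval_charpoly, h]
      simp only [eval_mul, eval_sub, eval_pow, eval_X, eval_C, Fintype.card_fin]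
      have hsign : ((-1 : ℂ)) ^ n * (-x) ^ (n - 2) = x ^ (n - 2) := by
        rw [neg_pow x, ← mul_assoc, ← pow_add]
        have he : n + (n - 2) = 2 * (n - 1) := by omega
        rw [he, pow_mul]
        norm_num
      have hμ : ((x ^ 2 : ℂ)) ^ (n - 2) = x ^ (n - 2) * x ^ (n - 2) := by
        rw [← pow_add, ← pow_mul]
        congr 1
        omega
      rw [← hx, hμ]
      linear_combination ((x - a) * (x - b) * (-x - a) * (-x - b) * x ^ (n - 2)) * hsign
    have : {x : ℂ | eval x ((M * M).charpoly)
        = eval x ((X - C (a ^ 2)) * (X - C (b ^ 2)) * X ^ (n - 2))} = Set.univ :=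
      Set.eq_univ_of_forall hall
    rw [this]
    exact Set.infinite_univ
  haveI : Nonempty (Fin n) := ⟨⟨0, by omega⟩⟩
  rw [Matrix.trace_eq_neg_charpoly_coeff, hq, Fintype.card_fin]
  have hexp : (X - C (a ^ 2)) * (X - C (b ^ 2))
      = X ^ 2 - C (a ^ 2 + b ^ 2) * X + C (a ^ 2 * b ^ 2) := by
    rw [_root_.map_add, _root_.map_mul]
    ring
  rw [hexp, Polynomial.coeff_mul_X_pow']
  have h12 : n - 2 ≤ n - 1 := by omega
  rw [if_pos h12]
  have h1 : n - 1 - (n - 2) = 1 := by omega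
  rw [h1]
  simp [coeff_X_pow, coeff_C, ← _root_.map_mul, ← _root_.map_pow]


/-- if a holomorphic self-map `F` of `Ω_n` (`n ≥ 2`) satisfies
`σ(F(A)) = π_n(f(ζ₁),…,f(ζ_n))` whenever `σ(A) = π_n(ζ₁,…,ζ_n)` for some
`f ∈ O(𝔻,𝔻)` with `f(0) = 0` and `f'(0) ≠ 0`, then the only nilpotent matrix mapped
to `0` by `F` is `0`. -/
theorem preimage_zero_inter_nilpotents (n : ℕ) (hn : 2 ≤ n)
    (F : Matrix (Fin n) (Fin n) ℂ → Matrix (Fin n) (Fin n) ℂ)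
    (hFhol : DifferentiableOn ℂ F (specBall n))
    (hFmap : MapsTo F (specBall n) (specBall n))
    (f : ℂ → ℂ)
    (hfhol : DifferentiableOn ℂ f (Metric.ball 0 1))
    (hfmap : MapsTo f (Metric.ball 0 1) (Metric.ball 0 1))
    (hf0 : f 0 = 0) (hf' : deriv f 0 ≠ 0)
    (hcompat : ∀ A ∈ specBall n, ∀ ζ : Fin n → ℂ,
      A.charpoly = ∏ i, (X - C (ζ i)) →
      (F A).charpoly = ∏ i, (X - C (f (ζ i)))) :
    ∀ A ∈ specBall n, IsNilpotent A → F A = 0 → A = 0 := by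
  intro A hA hnil hFA0
  by_contra hA0
  -- characteristic polynomial of A
  have hcpA : A.charpoly = X ^ n := by
    have h1 := Matrix.isNilpotent_charpoly_sub_pow_of_isNilpotent hnil
    rw [Fintype.card_fin] at h1
    exact sub_eq_zero.mp h1.eq_zero
  have hAn : A ^ n = 0 := by
    have h := A.aeval_self_charpoly
    rw [hcpA] at h
    simpa using h
  -- nilpotency index
  have hex : ∃ k, A ^ k = 0 := ⟨n, hAn⟩
  have hk : A ^ (Nat.find hex) = 0 := Nat.find_spec hex
  set k := Nat.find hex with hkdef
  have hk2 : 2 ≤ k := by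
    by_contra hlt
    push_neg at hlt
    have : k = 0 ∨ k = 1 := by omega
    rcases this with h0 | h1
    · rw [h0, pow_zero] at hk
      have := congrFun (congrFun hk ⟨0, by omega⟩) ⟨0, by omega⟩
      simp [Matrix.one_apply] at this
    · rw [h1, pow_one] at hk
      exact hA0 hk
  have hkm : A ^ (k - 1) ≠ 0 := Nat.find_min hex (by omega)
  obtain ⟨x, hx⟩ := exists_mulVec_ne_zero hkm
  set u : Fin n → ℂ := (A ^ (k - 2)) *ᵥ x with hu
  have hv_eq : A *ᵥ u = (A ^ (k - 1)) *ᵥ x := by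
    have he : k - 2 + 1 = k - 1 := by omega
    rw [hu, Matrix.mulVec_mulVec, ← pow_succ', he]
  have hvne : A *ᵥ u ≠ 0 := by rw [hv_eq]; exact hx
  have hAv : A *ᵥ (A *ᵥ u) = 0 := by
    rw [hv_eq, Matrix.mulVec_mulVec, ← pow_succ']
    have : k - 1 + 1 = k := by omega
    rw [this, hk, Matrix.zero_mulVec]
  set v : Fin n → ℂ := A *ᵥ u with hvdef
  -- a nonzero 2x2 minor of the pair (u, v)
  obtain ⟨i, j, hΔ⟩ : ∃ i j, u i * v j - u j * v i ≠ 0 := by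
    by_contra hc
    push_neg at hc
    obtain ⟨j0, hj0⟩ : ∃ j0, v j0 ≠ 0 := by
      by_contra hc2
      push_neg at hc2
      exact hvne (funext hc2)
    refine hvne ?_
    have husmul : u = (u j0 / v j0) • v := by
      funext i'
      have h1 := sub_eq_zero.mp (hc i' j0)
      rw [Pi.smul_apply, smul_eq_mul, div_mul_eq_mul_div, eq_div_iff hj0]
      linear_combination h1
    calc A *ᵥ u = A *ᵥ ((u j0 / v j0) • v) := by rw [← husmul]
      _ = (u j0 / v j0) • (A *ᵥ v) := Matrix.mulVec_smul _ _ _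
      _ = 0 := by rw [hvdef, hAv, smul_zero]
  set Δ : ℂ := u i * v j - u j * v i with hΔdef
  set aa : ℂ := -(u j) / Δ with haa
  set bb : ℂ := u i / Δ with hbb
  set φ : Fin n → ℂ := fun m => (if m = i then aa else 0) + (if m = j then bb else 0) with hφ
  have hij : i ≠ j := by
    intro h
    apply hΔ
    rw [hΔdef, h]
    ring
  have hdot : ∀ y : Fin n → ℂ, φ ⬝ᵥ y = aa * y i + bb * y j := by
    intro y
    simp only [hφ, dotProduct, add_mul, ite_mul, zero_mul, Finset.sum_add_distrib]
    rw [Finset.sum_ite_eq' Finset.univ i (fun m => aa * y m),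
      Finset.sum_ite_eq' Finset.univ j (fun m => bb * y m)]
    simp
  have hφu : φ ⬝ᵥ u = 0 := by
    rw [hdot, haa, hbb]
    field_simp
    ring
  have hφv : φ ⬝ᵥ (A *ᵥ u) = 1 := by
    rw [hdot, haa, hbb, ← hvdef]
    rw [div_mul_eq_mul_div, div_mul_eq_mul_div, ← add_div]
    rw [show -u j * v i + u i * v j = Δ by rw [hΔdef]; ring]
    exact div_self hΔ
  have hAAu : A *ᵥ (A *ᵥ u) = 0 := by rw [← hvdef]; exact hAv
  set B : Matrix (Fin n) (Fin n) ℂ := replicateCol (Fin 1) u * replicateRow (Fin 1) φ with hBdef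
  have hchar : ∀ w : ℂ, (A + w • B).charpoly = X ^ n - C w * X ^ (n - 2) := fun w =>
    charpoly_perturb hn A hcpA u φ hAAu hφu hφv w
  -- membership of the perturbed family in the spectral ball
  have hmem : ∀ w : ℂ, ‖w‖ < 1 → (A + w • B) ∈ specBall n := by
    intro w hw
    have hsqrt1 : Real.sqrt ‖w‖ < 1 := by
      rw [show (1 : ℝ) = Real.sqrt 1 by simp]
      exact Real.sqrt_lt_sqrt (norm_nonneg w) (by simpa using hw)
    apply mem_specBall_of_root_bound _ (Real.sqrt ‖w‖) (Real.sqrt_nonneg _) hsqrt1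
    intro z hz
    rw [hchar w] at hz
    simp only [eval_sub, eval_mul, eval_pow, eval_X, eval_C] at hz
    have hfact : z ^ (n - 2) * (z * z - w) = 0 := by
      have hzn : z ^ n = z ^ (n - 2) * (z * z) := by
        rw [← pow_two, ← pow_add]
        congr 1
        omega
      rw [mul_sub, ← hzn]
      linear_combination hz
    rcases mul_eq_zero.mp hfact with h | h
    · have hz0 : z = 0 := by
        by_cases h2 : n - 2 = 0
        · rw [h2, pow_zero] at h
          exact absurd h one_ne_zero
        · exact pow_eq_zero_iff h2 |>.mp h
      rw [hz0]
      simpa using Real.sqrt_nonneg _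
    · have hzz : z * z = w := sub_eq_zero.mp h
      have habs : ‖z‖ * ‖z‖ = ‖w‖ := by
        rw [← norm_mul, hzz]
      refine le_of_eq ?_
      calc ‖z‖ = Real.sqrt (‖z‖ * ‖z‖) :=
            (Real.sqrt_mul_self (norm_nonneg z)).symm
        _ = Real.sqrt ‖w‖ := by rw [habs]
  -- the holomorphic family G
  set G : ℂ → Matrix (Fin n) (Fin n) ℂ := fun w => F (A + w • B) with hG
  have hmapball : MapsTo (fun w : ℂ => A + w • B) (Metric.ball (0 : ℂ) 1) (specBall n) := by
    intro w hw
    exact hmem w (by simpa [mem_ball_zero_iff] using hw)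
  have h0ball : (0 : ℂ) ∈ Metric.ball (0 : ℂ) 1 := by norm_num [Metric.mem_ball]
  have hGdiff : DifferentiableAt ℂ G 0 := by
    have hinner : Differentiable ℂ (fun w : ℂ => A + w • B) :=
      Differentiable.const_add A (differentiable_id.smul_const B)
    have h0mem : (A + (0 : ℂ) • B) ∈ specBall n := by simpa using hA
    have hcomp : DifferentiableWithinAt ℂ (F ∘ fun w : ℂ => A + w • B) (Metric.ball 0 1) 0 :=
      DifferentiableWithinAt.comp 0 (hFhol _ h0mem)
        ((hinner 0).differentiableWithinAt) hmapball
    exact hcomp.differentiableAt (Metric.isOpen_ball.mem_nhds h0ball)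
  have hG0 : G 0 = 0 := by simp [hG, hFA0]
  have hbig : (fun w => G w) =O[nhds (0 : ℂ)] (fun w => w) := by
    have := hGdiff.hasFDerivAt.isBigO_sub
    simpa [hG0] using this
  obtain ⟨c, hc⟩ := Asymptotics.isBigO_iff.mp hbig
  -- the trace identity
  have htr : ∀ e : ℂ, ‖e‖ < 1 →
      Matrix.trace (G (e * e) * G (e * e)) = (f e) ^ 2 + (f (-e)) ^ 2 := by
    intro e he
    have hee : ‖e * e‖ < 1 := by
      rw [norm_mul]
      nlinarith [norm_nonneg e]
    have hmemE := hmem (e * e) hee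
    set ζ : Fin n → ℂ := fun i' =>
      if (i' : ℕ) = 0 then e else if (i' : ℕ) = 1 then -e else 0 with hζ
    have hXX : (X : ℂ[X]) ^ 2 * X ^ (n - 2) = X ^ n := by
      rw [← pow_add]
      congr 1
      omega
    have hprodA : (A + (e * e) • B).charpoly = ∏ i', (X - C (ζ i')) := by
      rw [hchar, hζ, prod_two hn e (-e), ← hXX,
        show (C (e * e) : ℂ[X]) = C e * C e from map_mul C e e,
        show (C (-e) : ℂ[X]) = -C e from map_neg C e]
      ring
    have hFres := hcompat _ hmemE ζ hprodA
    have hfζ : ∀ i' : Fin n, f (ζ i') =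
        (if (i' : ℕ) = 0 then f e else if (i' : ℕ) = 1 then f (-e) else 0) := by
      intro i'
      by_cases h0 : (i' : ℕ) = 0
      · simp [hζ, h0]
      · by_cases h1 : (i' : ℕ) = 1
        · simp [hζ, h0, h1]
        · simp [hζ, h0, h1, hf0]
    have hprodF : (∏ i', (X - C (f (ζ i'))))
        = (X - C (f e)) * (X - C (f (-e))) * X ^ (n - 2) := by
      rw [Finset.prod_congr rfl (fun i' _ => by rw [hfζ i'])]
      exact prod_two hn (f e) (f (-e))
    rw [hprodF] at hFres
    exact trace_sq hn _ (f e) (f (-e)) hFres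
  -- derivative of f at 0
  have hfd : HasDerivAt f (deriv f 0) 0 :=
    ((hfhol 0 h0ball).differentiableAt (Metric.isOpen_ball.mem_nhds h0ball)).hasDerivAt
  have T1 : Filter.Tendsto (fun e => f e / e) (nhdsWithin 0 {(0 : ℂ)}ᶜ) (nhds (deriv f 0)) := by
    have hT := hasDerivAt_iff_tendsto_slope.mp hfd
    have hs : slope f 0 = fun e => f e / e := by
      funext e
      rw [slope_def_field, hf0]
      simp
    rwa [hs] at hT
  have hnegt : Filter.Tendsto (fun e : ℂ => -e) (nhdsWithin 0 {(0 : ℂ)}ᶜ)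
      (nhdsWithin 0 {(0 : ℂ)}ᶜ) := by
    refine tendsto_nhdsWithin_of_tendsto_nhds_of_eventually_within _ ?_ ?_
    · exact (continuous_neg.tendsto' 0 0 (by simp)).mono_left nhdsWithin_le_nhds
    · filter_upwards [self_mem_nhdsWithin] with e he
      simpa using he
  have T2 : Filter.Tendsto (fun e => f (-e) / (-e)) (nhdsWithin 0 {(0 : ℂ)}ᶜ)
      (nhds (deriv f 0)) := T1.comp hnegt
  have Tsum : Filter.Tendsto (fun e => (f e / e) ^ 2 + (f (-e) / (-e)) ^ 2)
      (nhdsWithin 0 {(0 : ℂ)}ᶜ) (nhds ((deriv f 0) ^ 2 + (deriv f 0) ^ 2)) :=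
    (T1.pow 2).add (T2.pow 2)
  have hsq : Filter.Tendsto (fun e : ℂ => e * e) (nhdsWithin 0 {(0 : ℂ)}ᶜ) (nhds 0) := by
    have h' : Filter.Tendsto (fun e : ℂ => e * e) (nhds 0) (nhds 0) := by
      have hc : Continuous fun e : ℂ => e * e := continuous_id.mul continuous_id
      simpa using hc.tendsto (0 : ℂ)
    exact h'.mono_left nhdsWithin_le_nhds
  have hball : ∀ᶠ e in nhdsWithin 0 {(0 : ℂ)}ᶜ, ‖e‖ < 1 := by
    have h' : ∀ᶠ e in nhds (0 : ℂ), ‖e‖ < 1 := by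
      filter_upwards [Metric.ball_mem_nhds (0 : ℂ) one_pos] with e he
      simpa [mem_ball_zero_iff] using he
    exact h'.filter_mono nhdsWithin_le_nhds
  have hevent : ∀ᶠ e in nhdsWithin 0 {(0 : ℂ)}ᶜ,
      (f e / e) ^ 2 + (f (-e) / (-e)) ^ 2
        = Matrix.trace (G (e * e) * G (e * e)) / (e * e) := by
    filter_upwards [self_mem_nhdsWithin, hball] with e hne h1
    have he0 : (e : ℂ) ≠ 0 := hne
    rw [htr e h1, div_pow, div_pow, show ((-e) : ℂ) ^ 2 = e ^ 2 by ring,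
      ← add_div, show (e : ℂ) ^ 2 = e * e by ring]
  have hbound : ∀ᶠ e in nhdsWithin 0 {(0 : ℂ)}ᶜ,
      ‖Matrix.trace (G (e * e) * G (e * e)) / (e * e)‖
        ≤ ((n : ℝ) ^ 2 * c ^ 2) * (‖e‖ * ‖e‖) := by
    filter_upwards [hsq.eventually hc, self_mem_nhdsWithin] with e hce hne
    have he0 : (e : ℂ) ≠ 0 := hne
    have hee0 : (e * e : ℂ) ≠ 0 := mul_ne_zero he0 he0
    have hpos : (0 : ℝ) < ‖e * e‖ := norm_pos_iff.mpr hee0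
    rw [norm_div, div_le_iff₀ hpos]
    have h1 := abs_trace_mul_le (G (e * e))
    have h2 : ‖G (e * e)‖ ^ 2 ≤ (c * ‖e * e‖) ^ 2 := by
      nlinarith [norm_nonneg (G (e * e)), hce]
    have hne' : ‖e * e‖ = ‖e‖ * ‖e‖ := norm_mul e e
    calc ‖Matrix.trace (G (e * e) * G (e * e))‖
        ≤ (n : ℝ) ^ 2 * ‖G (e * e)‖ ^ 2 := h1
      _ ≤ (n : ℝ) ^ 2 * (c * ‖e * e‖) ^ 2 :=
          mul_le_mul_of_nonneg_left h2 (by positivity)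
      _ = (n : ℝ) ^ 2 * c ^ 2 * (‖e‖ * ‖e‖) * ‖e * e‖ := by rw [hne']; ring
  have hzero : Filter.Tendsto (fun e => Matrix.trace (G (e * e) * G (e * e)) / (e * e))
      (nhdsWithin 0 {(0 : ℂ)}ᶜ) (nhds 0) := by
    apply squeeze_zero_norm' hbound
    have hcont : Continuous fun e : ℂ => ((n : ℝ) ^ 2 * c ^ 2) * (‖e‖ * ‖e‖) :=
      continuous_const.mul (continuous_norm.mul continuous_norm)
    have h' := hcont.tendsto (0 : ℂ)
    simp only [norm_zero, mul_zero] at h'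
    exact h'.mono_left nhdsWithin_le_nhds
  have huniq : (deriv f 0) ^ 2 + (deriv f 0) ^ 2 = 0 :=
    tendsto_nhds_unique (Tsum.congr' hevent) hzero
  have hd2 : (deriv f 0) ^ 2 = 0 := add_self_eq_zero.mp huniq
  exact hf' (pow_eq_zero_iff two_ne_zero |>.mp hd2)
end

section
/- Let n ≥ 2 and F be a holomorphic self-map of the spectral unit ball Ω_n with F(0) = 0, satisfying σ(F(A)) = π_n(f(ζ_1),…,f(ζ_n)) whenever σ(A) = π_n(ζ_1,…,ζ_n), for some f ∈ O(𝔻,𝔻) with f'(0) = α ≠ 0. Then for every V ∈ M_n(ℂ), the matrix (1/α)·F'(0)(V) has the same characteristic polynomial as V; consequently F'(0) is a linear isomorphism of M_n(ℂ). -/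
open Matrix Polynomial Set Filter Topology

attribute [local instance] Matrix.normedAddCommGroup Matrix.normedSpace

namespace SpecAux

variable {n : ℕ}

lemma eval_charpoly (M : Matrix (Fin n) (Fin n) ℂ) (z : ℂ) :
    (M.charpoly).eval z = (z • (1 : Matrix (Fin n) (Fin n) ℂ) - M).det := by
  rw [Matrix.charpoly, ← Polynomial.coe_evalRingHom, RingHom.map_det]
  congr 1
  ext i j
  by_cases h : i = j <;>
    simp [charmatrix_apply, Matrix.map_apply, Matrix.sub_apply, Matrix.smul_apply,
      Matrix.one_apply, Matrix.diagonal_apply, h]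

lemma abs_le_of_mem_spectrum {A : Matrix (Fin n) (Fin n) ℂ} {μ : ℂ}
    (hμ : μ ∈ spectrum ℂ A) : ‖μ‖ ≤ n * ‖A‖ := by
  have hdet : (μ • (1 : Matrix (Fin n) (Fin n) ℂ) - A).det = 0 := by
    by_contra h
    exact (spectrum.mem_iff.mp hμ)
      (by rw [Algebra.algebraMap_eq_smul_one]
          exact (Matrix.isUnit_iff_isUnit_det _).mpr (isUnit_iff_ne_zero.mpr h))
  obtain ⟨v, hv0, hv⟩ := Matrix.exists_mulVec_eq_zero_iff.mpr hdet
  have hAv : A.mulVec v = μ • v := by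
    rw [Matrix.sub_mulVec, Matrix.smul_mulVec, Matrix.one_mulVec] at hv
    exact (sub_eq_zero.mp hv).symm
  obtain ⟨j, hj⟩ := Function.ne_iff.mp hv0
  rw [Pi.zero_apply] at hj
  obtain ⟨i, -, hi⟩ := Finset.exists_max_image Finset.univ
      (fun k => ‖v k‖) ⟨j, Finset.mem_univ j⟩
  have hvi : 0 < ‖v i‖ :=
    lt_of_lt_of_le (norm_pos_iff.mpr hj) (hi j (Finset.mem_univ j))
  have hmain : ‖μ‖ * ‖v i‖ ≤ (n * ‖A‖) * ‖v i‖ := by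
    have h1 : μ * v i = (A.mulVec v) i := by
      rw [hAv]; simp
    calc ‖μ‖ * ‖v i‖ = ‖μ * v i‖ := (norm_mul _ _).symm
      _ = ‖(A.mulVec v) i‖ := by rw [h1]
      _ = ‖∑ k, A i k * v k‖ := by rw [Matrix.mulVec]; rfl
      _ ≤ ∑ k, ‖A i k * v k‖ := norm_sum_le _ _
      _ ≤ ∑ _k : Fin n, ‖A‖ * ‖v i‖ := by
          refine Finset.sum_le_sum fun k _ => ?_
          rw [norm_mul]
          refine mul_le_mul ?_ (hi k (Finset.mem_univ k)) (norm_nonneg _)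
            (norm_nonneg A)
          exact Matrix.norm_entry_le_entrywise_sup_norm A
      _ = (n * ‖A‖) * ‖v i‖ := by
          rw [Finset.sum_const, Finset.card_univ, Fintype.card_fin, nsmul_eq_mul]; ring
  exact le_of_mul_le_mul_right hmain hvi

lemma rho_le (A : Matrix (Fin n) (Fin n) ℂ) : rho A ≤ n * ‖A‖ :=
  Real.sSup_le (by rintro r ⟨μ, hμ, rfl⟩; exact abs_le_of_mem_spectrum hμ)
    (by positivity)

lemma mem_specBall {A : Matrix (Fin n) (Fin n) ℂ} (h : ‖A‖ < ((n : ℝ) + 1)⁻¹) :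
    A ∈ specBall n := by
  have h1 : rho A ≤ n * ‖A‖ := rho_le A
  have h2 : (0:ℝ) ≤ ‖A‖ := norm_nonneg A
  have h3 : (0:ℝ) < (n : ℝ) + 1 := by positivity
  have h5 : ((n:ℝ)+1) * ‖A‖ < ((n:ℝ)+1) * ((n:ℝ)+1)⁻¹ := mul_lt_mul_of_pos_left h h3
  rw [mul_inv_cancel₀ h3.ne'] at h5
  show rho A < 1
  calc rho A ≤ n * ‖A‖ := h1
    _ ≤ ((n:ℝ)+1) * ‖A‖ := by nlinarith
    _ < 1 := h5

lemma specBall_mem_nhds : specBall n ∈ 𝓝 (0 : Matrix (Fin n) (Fin n) ℂ) := by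
  filter_upwards [Metric.ball_mem_nhds (0 : Matrix (Fin n) (Fin n) ℂ)
    (by positivity : (0:ℝ) < ((n:ℝ) + 1)⁻¹)] with A hA
  exact mem_specBall (by simpa using mem_ball_zero_iff.mp hA)

lemma charpoly_smul {M : Matrix (Fin n) (Fin n) ℂ} {lam : Fin n → ℂ} {c : ℂ} (hc : c ≠ 0)
    (h : M.charpoly = ∏ i, (X - C (lam i))) :
    (c • M).charpoly = ∏ i, (X - C (c * lam i)) := by
  apply Polynomial.funext
  intro z
  have hfac : z • (1 : Matrix (Fin n) (Fin n) ℂ) - c • M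
      = c • ((c⁻¹ * z) • (1 : Matrix (Fin n) (Fin n) ℂ) - M) := by
    rw [smul_sub, smul_smul, mul_inv_cancel_left₀ hc]
  rw [eval_charpoly, hfac, Matrix.det_smul, ← eval_charpoly, h]
  simp only [eval_prod, eval_sub, eval_X, eval_C]
  have hpow : c ^ Fintype.card (Fin n) = ∏ _i : Fin n, c := by
    rw [Finset.prod_const, Finset.card_univ]
  rw [hpow, ← Finset.prod_mul_distrib]
  exact Finset.prod_congr rfl fun i _ => by
    rw [mul_sub, mul_inv_cancel_left₀ hc]

lemma exists_charpoly_eq_prod (M : Matrix (Fin n) (Fin n) ℂ) :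
    ∃ lam : Fin n → ℂ, M.charpoly = ∏ i, (X - C (lam i)) := by
  have hm : M.charpoly.Monic := M.charpoly_monic
  have hs : Splits M.charpoly := IsAlgClosed.splits _
  have hcard : M.charpoly.roots.card = n := by
    rw [Polynomial.splits_iff_card_roots.mp hs, Matrix.charpoly_natDegree_eq_dim,
      Fintype.card_fin]
  set l := M.charpoly.roots.toList with hl
  have hlen : l.length = n := by rw [hl, Multiset.length_toList, hcard]
  refine ⟨fun i => l.get (Fin.cast hlen.symm i), ?_⟩
  have h1 := hs.eq_prod_roots_of_monic hm
  have h2 : M.charpoly.roots = (l : Multiset ℂ) := by rw [hl, Multiset.coe_toList]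
  rw [h1, h2]
  have h3 : (l : Multiset ℂ).map (fun a => X - C a) = ↑(l.map (fun a => X - C a)) :=
    Multiset.map_coe _ _
  rw [h3, Multiset.prod_coe]
  have h4 : l.map (fun a => X - C a)
      = List.ofFn (fun i : Fin n => X - C (l.get (Fin.cast hlen.symm i))) := by
    apply List.ext_getElem
    · simp [hlen]
    · intro k hk1 hk2
      simp [List.getElem_ofFn, List.getElem_map, Fin.cast, List.get]
  rw [h4, List.prod_ofFn]

end SpecAux

namespace SpecAux

variable {n : ℕ}

lemma exists_basis_eq (i₀ : Fin n) {x : Fin n → ℂ} (hx : x ≠ 0) :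
    ∃ b : Module.Basis (Fin n) ℂ (Fin n → ℂ), b i₀ = x := by
  have li : LinearIndepOn ℂ id ({x} : Set (Fin n → ℂ)) :=
    (linearIndepOn_singleton_iff ℂ).mpr hx
  let b := Module.Basis.extend li
  haveI : Fintype (li.extend (Set.subset_univ ({x} : Set (Fin n → ℂ)))) :=
    FiniteDimensional.fintypeBasisIndex b
  have hcard : Fintype.card (li.extend (Set.subset_univ ({x} : Set (Fin n → ℂ))))
      = Fintype.card (Fin n) := by
    rw [← Module.finrank_eq_card_basis b, Fintype.card_fin]
    simp
  have hxs : x ∈ li.extend (Set.subset_univ ({x} : Set (Fin n → ℂ))) :=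
    li.subset_extend _ rfl
  let e : (li.extend (Set.subset_univ ({x} : Set (Fin n → ℂ)))) ≃ Fin n :=
    Fintype.equivOfCardEq hcard
  let e' := e.trans (Equiv.swap (e ⟨x, hxs⟩) i₀)
  refine ⟨b.reindex e', ?_⟩
  rw [Module.Basis.reindex_apply]
  have he : e'.symm i₀ = ⟨x, hxs⟩ := by
    simp only [e', Equiv.symm_trans_apply]
    rw [Equiv.symm_swap, Equiv.swap_apply_right, Equiv.symm_apply_apply]
  rw [he]
  exact Module.Basis.extend_apply_self li _

lemma exists_invertible_mulVec {x y : Fin n → ℂ} (hx : x ≠ 0) (hy : y ≠ 0) :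
    ∃ U : Matrix (Fin n) (Fin n) ℂ, U.det ≠ 0 ∧ U.mulVec x = y := by
  have hn : 0 < n := by
    obtain ⟨i, -⟩ := Function.ne_iff.mp hx
    exact lt_of_le_of_lt (Nat.zero_le _) i.isLt
  let i₀ : Fin n := ⟨0, hn⟩
  obtain ⟨bx, hbx⟩ := exists_basis_eq i₀ hx
  obtain ⟨by', hby⟩ := exists_basis_eq i₀ hy
  let g : (Fin n → ℂ) ≃ₗ[ℂ] (Fin n → ℂ) := bx.equiv by' (Equiv.refl _)
  refine ⟨LinearMap.toMatrix' (g : (Fin n → ℂ) →ₗ[ℂ] (Fin n → ℂ)), ?_, ?_⟩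
  · rw [LinearMap.det_toMatrix']
    exact (LinearEquiv.isUnit_det' g).ne_zero
  · have h2 : (LinearMap.toMatrix' (g : (Fin n → ℂ) →ₗ[ℂ] (Fin n → ℂ))).mulVec x
        = g x := by
      rw [← Matrix.toLin'_apply, Matrix.toLin'_toMatrix']
      rfl
    rw [h2, ← hbx]
    rw [show g (bx i₀) = by' i₀ from bx.equiv_apply i₀ by' (Equiv.refl _), hby]

end SpecAux

open SpecAux

/-- if `F : Ω_n → Ω_n` (`n ≥ 2`) is holomorphic with `F(0) = 0`,
compatible with an `f ∈ O(𝔻,𝔻)` having `α := f'(0) ≠ 0`, then for every `V`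
the matrix `α⁻¹ • F'(0)(V)` has the same characteristic polynomial as `V`;
consequently `F'(0)` is a linear isomorphism of `M_n(ℂ)`. -/
theorem derivative_at_zero_isomorphism (n : ℕ) (hn : 2 ≤ n)
    (F : Matrix (Fin n) (Fin n) ℂ → Matrix (Fin n) (Fin n) ℂ)
    (hFhol : DifferentiableOn ℂ F (specBall n))
    (hFmap : MapsTo F (specBall n) (specBall n))
    (hF0 : F 0 = 0)
    (f : ℂ → ℂ)
    (hfhol : DifferentiableOn ℂ f (Metric.ball 0 1))
    (hfmap : MapsTo f (Metric.ball 0 1) (Metric.ball 0 1))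
    (hf' : deriv f 0 ≠ 0)
    (hcompat : ∀ A ∈ specBall n, ∀ ζ : Fin n → ℂ,
      A.charpoly = ∏ i, (X - C (ζ i)) →
      (F A).charpoly = ∏ i, (X - C (f (ζ i)))) :
    (∀ V : Matrix (Fin n) (Fin n) ℂ,
      ((deriv f 0)⁻¹ • fderiv ℂ F 0 V).charpoly = V.charpoly) ∧
    Function.Bijective (fderiv ℂ F 0) := by
  have hnpos : 0 < n := lt_of_lt_of_le two_pos hn
  have h0mem : (0 : Matrix (Fin n) (Fin n) ℂ) ∈ specBall n :=
    mem_specBall (by simp; positivity)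
  have hnhds : specBall n ∈ 𝓝 (0 : Matrix (Fin n) (Fin n) ℂ) := specBall_mem_nhds
  have hFd : HasFDerivAt F (fderiv ℂ F 0) 0 := (hFhol.differentiableAt hnhds).hasFDerivAt
  have hfd : HasDerivAt f (deriv f 0) 0 :=
    (hfhol.differentiableAt (Metric.isOpen_ball.mem_nhds (by simp))).hasDerivAt
  have hchar0 : (0 : Matrix (Fin n) (Fin n) ℂ).charpoly
      = ∏ i : Fin n, (X - C ((fun _ : Fin n => (0:ℂ)) i)) := by
    apply Polynomial.funext
    intro z
    simp [eval_charpoly, eval_prod, Matrix.det_smul, Finset.prod_const]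
  have hf0 : f 0 = 0 := by
    have h := hcompat 0 h0mem (fun _ => 0) hchar0
    rw [hF0] at h
    have h2 := congrArg (Polynomial.eval (f 0)) h
    rw [eval_charpoly] at h2
    simp only [eval_prod, eval_sub, eval_X, eval_C, eval_pow, sub_self, Finset.prod_const,
      sub_zero, Matrix.det_smul, Matrix.det_one, mul_one, Fintype.card_fin,
      Finset.card_univ] at h2
    rw [zero_pow hnpos.ne'] at h2
    exact pow_eq_zero_iff hnpos.ne' |>.mp h2
  set L := fderiv ℂ F 0 with hLdef
  set α := deriv f 0 with hα
  have main : ∀ (V : Matrix (Fin n) (Fin n) ℂ) (lam : Fin n → ℂ),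
      V.charpoly = ∏ i, (X - C (lam i)) →
      (L V).charpoly = ∏ i, (X - C (α * lam i)) := by
    intro V lam hlam
    apply Polynomial.funext
    intro z
    -- matrix slope limit
    have hslope : Filter.Tendsto (fun t : ℂ => t⁻¹ • F (t • V)) (𝓝[≠] (0:ℂ))
        (𝓝 (L V)) := by
      have h1 : HasDerivAt (fun t : ℂ => t • V) ((1:ℂ) • V) 0 :=
        (hasDerivAt_id (0:ℂ)).smul_const V
      rw [one_smul] at h1
      have hFd' : HasFDerivAt F L ((0:ℂ) • V) := by rw [zero_smul]; exact hFd
      have h2 : HasDerivAt (fun t : ℂ => F (t • V)) (L V) 0 :=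
        hFd'.comp_hasDerivAt 0 h1
      have h3 := hasDerivAt_iff_tendsto_slope.mp h2
      refine h3.congr fun t => ?_
      simp [slope_fun_def, zero_smul, hF0]
    have hsl : ∀ i : Fin n, Filter.Tendsto (fun t : ℂ => t⁻¹ * f (t * lam i))
        (𝓝[≠] (0:ℂ)) (𝓝 (α * lam i)) := by
      intro i
      have h1 : HasDerivAt (fun t : ℂ => t * lam i) (lam i) 0 := by
        simpa using (hasDerivAt_id (0:ℂ)).mul_const (lam i)
      have hfd' : HasDerivAt f α ((0:ℂ) * lam i) := by rw [zero_mul]; exact hfd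
      have h2 : HasDerivAt (fun t : ℂ => f (t * lam i)) (α * lam i) 0 := by
        exact hfd'.comp 0 h1
      have h3 := hasDerivAt_iff_tendsto_slope.mp h2
      refine h3.congr fun t => ?_
      simp [slope_fun_def, hf0, smul_eq_mul]
    have hprod : Filter.Tendsto (fun t : ℂ => ∏ i : Fin n, (z - t⁻¹ * f (t * lam i)))
        (𝓝[≠] (0:ℂ)) (𝓝 (∏ i : Fin n, (z - α * lam i))) :=
      tendsto_finset_prod _ fun i _ => tendsto_const_nhds.sub (hsl i)
    have hdetc : Continuous fun M : Matrix (Fin n) (Fin n) ℂ => M.det :=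
      continuous_id.matrix_det
    have hdet : Filter.Tendsto
        (fun t : ℂ => (z • (1 : Matrix (Fin n) (Fin n) ℂ) - t⁻¹ • F (t • V)).det)
        (𝓝[≠] (0:ℂ)) (𝓝 ((z • (1 : Matrix (Fin n) (Fin n) ℂ) - L V).det)) :=
      (hdetc.tendsto _).comp (tendsto_const_nhds.sub hslope)
    have hmem : ∀ᶠ t : ℂ in 𝓝[≠] (0:ℂ), t • V ∈ specBall n := by
      have hc : Filter.Tendsto (fun t : ℂ => t • V) (𝓝 (0:ℂ))
          (𝓝 (0 : Matrix (Fin n) (Fin n) ℂ)) := by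
        have hcont : Continuous fun t : ℂ => t • V := continuous_id.smul continuous_const
        simpa using hcont.tendsto 0
      exact (hc.eventually hnhds).filter_mono nhdsWithin_le_nhds
    have heq : ∀ᶠ t : ℂ in 𝓝[≠] (0:ℂ),
        (z • (1 : Matrix (Fin n) (Fin n) ℂ) - t⁻¹ • F (t • V)).det
          = ∏ i : Fin n, (z - t⁻¹ * f (t * lam i)) := by
      filter_upwards [hmem, self_mem_nhdsWithin] with t htV ht0
      have ht : t ≠ 0 := ht0
      have hcp : (t • V).charpoly = ∏ i, (X - C (t * lam i)) := charpoly_smul ht hlam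
      have hFc := hcompat (t • V) htV _ hcp
      have hfac : z • (1 : Matrix (Fin n) (Fin n) ℂ) - t⁻¹ • F (t • V)
          = t⁻¹ • ((t * z) • (1 : Matrix (Fin n) (Fin n) ℂ) - F (t • V)) := by
        rw [smul_sub, smul_smul, inv_mul_cancel_left₀ ht]
      rw [hfac, Matrix.det_smul, ← SpecAux.eval_charpoly, hFc]
      simp only [eval_prod, eval_sub, eval_X, eval_C]
      have hpow : (t⁻¹) ^ Fintype.card (Fin n) = ∏ _i : Fin n, t⁻¹ := by
        rw [Finset.prod_const, Finset.card_univ]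
      rw [hpow, ← Finset.prod_mul_distrib]
      exact Finset.prod_congr rfl fun i _ => by
        rw [mul_sub, inv_mul_cancel_left₀ ht]
    have hfin := tendsto_nhds_unique (hdet.congr' heq) hprod
    rw [SpecAux.eval_charpoly]
    simp only [eval_prod, eval_sub, eval_X, eval_C]
    exact hfin
  have key : ∀ V : Matrix (Fin n) (Fin n) ℂ, (α⁻¹ • L V).charpoly = V.charpoly := by
    intro V
    obtain ⟨lam, hlam⟩ := exists_charpoly_eq_prod V
    have h1 := main V lam hlam
    have h2 := charpoly_smul (inv_ne_zero hf') h1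
    rw [h2, hlam]
    exact Finset.prod_congr rfl fun i _ => by rw [inv_mul_cancel_left₀ hf']
  refine ⟨key, ?_⟩
  have hker : ∀ V : Matrix (Fin n) (Fin n) ℂ, L V = 0 → V = 0 := by
    intro V hV
    by_contra hne
    obtain ⟨x, hx⟩ : ∃ x, V.mulVec x ≠ 0 := by
      by_contra hall
      push_neg at hall
      apply hne
      ext i j
      have h := congrFun (hall (Pi.single j 1)) i
      simpa [Matrix.mulVec_single] using h
    have hx0 : x ≠ 0 := fun h => hx (by rw [h, Matrix.mulVec_zero])
    have hch : ∀ W : Matrix (Fin n) (Fin n) ℂ, (V + W).charpoly = W.charpoly := by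
      intro W
      have e1 := key (V + W)
      have e2 := key W
      rw [map_add, hV, zero_add] at e1
      rw [← e1, e2]
    have hdet : ∀ W : Matrix (Fin n) (Fin n) ℂ, (V + W).det = W.det := by
      intro W
      have h := congrArg (Polynomial.eval 0) (hch W)
      rw [SpecAux.eval_charpoly, SpecAux.eval_charpoly] at h
      simp only [zero_smul, zero_sub, Matrix.det_neg, Fintype.card_fin] at h
      exact mul_left_cancel₀ (pow_ne_zero _ (by norm_num)) h
    obtain ⟨U, hUdet, hUx⟩ := exists_invertible_mulVec hx0 hx
    have h1 : (V + (U - V)).det = (U - V).det := hdet (U - V)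
    rw [add_sub_cancel] at h1
    have h2 : (U - V).det = 0 :=
      Matrix.exists_mulVec_eq_zero_iff.mp ⟨x, hx0, by rw [Matrix.sub_mulVec, hUx, sub_self]⟩
    exact hUdet (h1.trans h2)
  have hinj : Function.Injective (⇑L) := by
    intro V₁ V₂ h
    have h2 : V₁ - V₂ = 0 := hker _ (by rw [map_sub, h, sub_self])
    exact sub_eq_zero.mp h2
  exact ⟨hinj, LinearMap.surjective_of_injective
    (f := (L : Matrix (Fin n) (Fin n) ℂ →L[ℂ] Matrix (Fin n) (Fin n) ℂ).toLinearMap) hinj⟩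
end
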